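/- arXiv:1710.04146 — 4 statements merged into one kernel-verified Lean document; each statement's English description precedes it below -/
import Mathlib

section
/- Let a, b ∈ ℤ with a ≤ −1 and b ≥ 1, and let Box = [a,b] ⊆ ℝ. Let f be an integral concave piecewise-affine function on Box which is at height one, satisfies f(0) > 0, and is not of the form x ↦ u·x + c with u, c ∈ ℤ. Then f(−1) ≤ 0 or f(1) ≤ 0. -/
open scoped BigOperators

noncomputable section

/-- Embedding of a lattice point of `ℤ^d × ℤ` into `ℝ^d × ℝ`. -/
def latticeEmbed (d : ℕ) (p : (Fin d → ℤ) × ℤ) : (Fin d → ℝ) × ℝ :=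
  (fun i => (p.1 i : ℝ), (p.2 : ℝ))

/-- `Box ⊆ ℝ^d` is a lattice polytope: the convex hull of a finite set of lattice points. -/
def IsLatticePolytope (d : ℕ) (Box : Set (Fin d → ℝ)) : Prop :=
  ∃ S : Finset (Fin d → ℤ),
    Box = convexHull ℝ ((fun v : Fin d → ℤ => fun i => (v i : ℝ)) '' (S : Set (Fin d → ℤ)))

/-- The pairing of `x ∈ ℝ^d` with an integral vector `u ∈ ℤ^d`. -/
def dotZ (d : ℕ) (x : Fin d → ℝ) (u : Fin d → ℤ) : ℝ := ∑ i, x i * (u i : ℝ)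

/-- `f` is an integral concave piecewise-affine function on `Box`: there is a finite set
`S ⊆ ℤ^d × ℤ` such that `Box` is the projection of `conv S` and `f x` is the largest `t`
with `(x, t) ∈ conv S`. -/
def IsICPA (d : ℕ) (Box : Set (Fin d → ℝ)) (f : (Fin d → ℝ) → ℝ) : Prop :=
  ∃ S : Finset ((Fin d → ℤ) × ℤ),
    Prod.fst '' (convexHull ℝ (latticeEmbed d '' (S : Set ((Fin d → ℤ) × ℤ)))) = Box ∧
    ∀ x ∈ Box,
      IsGreatest {t : ℝ | (x, t) ∈ convexHull ℝ (latticeEmbed d '' (S : Set ((Fin d → ℤ) × ℤ)))}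
        (f x)

/-- Every facet of the graph of `f` lies at height one. -/
def AtHeightOne (d : ℕ) (Box : Set (Fin d → ℝ)) (f : (Fin d → ℝ) → ℝ) : Prop :=
  ∀ x ∈ Box, ∃ (u : Fin d → ℤ) (m : ℤ),
    |dotZ d x u + (m : ℝ) * f x| = 1 ∧
    ∀ y ∈ Box, dotZ d y u + (m : ℝ) * f y ≤ dotZ d x u + (m : ℝ) * f x

/-- A combinatorial divisorial polytope (CDP) with base in `ℝ^d`. -/
structure CDP (d : ℕ) where
  box : Set (Fin d → ℝ)
  funcs : List ((Fin d → ℝ) → ℝ)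
  lattice : IsLatticePolytope d box
  fullDim : (interior box).Nonempty
  icpa : ∀ f ∈ funcs, IsICPA d box f
  posSum : ∀ x ∈ interior box, 0 < (funcs.map (fun f => f x)).sum

/-- Two functions agree on a set. -/
def EqOnBox (d : ℕ) (B : Set (Fin d → ℝ)) (f g : (Fin d → ℝ) → ℝ) : Prop :=
  ∀ x ∈ B, f x = g x

/-- Move (i): addition of the zero function. -/
def MoveZero (d : ℕ) (P Q : CDP d) : Prop :=
  Q.box = P.box ∧
    List.Forall₂ (EqOnBox d P.box) Q.funcs (P.funcs ++ [fun _ => (0 : ℝ)])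

/-- Move (ii): permutation of the functions. -/
def MovePerm (d : ℕ) (P Q : CDP d) : Prop :=
  Q.box = P.box ∧ ∃ L, List.Perm L P.funcs ∧ List.Forall₂ (EqOnBox d P.box) Q.funcs L

/-- Move (iii): integral affine transformation of the base. -/
def MoveAffine (d : ℕ) (P Q : CDP d) : Prop :=
  ∃ (A B : Matrix (Fin d) (Fin d) ℤ) (t : Fin d → ℤ),
    A * B = 1 ∧ B * A = 1 ∧
    Q.box = (fun x : Fin d → ℝ => fun i => (∑ j, (A i j : ℝ) * x j) + (t i : ℝ)) '' P.box ∧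
    List.Forall₂ (EqOnBox d Q.box) Q.funcs
      (P.funcs.map (fun f => f ∘ fun x : Fin d → ℝ => fun i => ∑ j, (B i j : ℝ) * (x j - (t j : ℝ))))

/-- Move (iv): translation by integers summing to zero. -/
def MoveTranslate (d : ℕ) (P Q : CDP d) : Prop :=
  Q.box = P.box ∧ ∃ α : List ℤ, α.length = P.funcs.length ∧ α.sum = 0 ∧
    List.Forall₂ (EqOnBox d P.box) Q.funcs
      (List.zipWith (fun f (a : ℤ) => fun x => f x + (a : ℝ)) P.funcs α)

/-- Move (v): shearing by a covector with integral coefficients summing to zero. -/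
def MoveShear (d : ℕ) (P Q : CDP d) : Prop :=
  Q.box = P.box ∧ ∃ (v : Fin d → ℤ) (β : List ℤ), β.length = P.funcs.length ∧ β.sum = 0 ∧
    List.Forall₂ (EqOnBox d P.box) Q.funcs
      (List.zipWith (fun f (b : ℤ) => fun x => f x + (b : ℝ) * dotZ d x v) P.funcs β)

/-- One elementary move between CDPs. -/
def CDPMove (d : ℕ) (P Q : CDP d) : Prop :=
  MoveZero d P Q ∨ MovePerm d P Q ∨ MoveAffine d P Q ∨ MoveTranslate d P Q ∨ MoveShear d P Q

/-- Equivalence of CDPs: the smallest equivalence relation generated by the moves. -/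
def CDPEquiv (d : ℕ) : CDP d → CDP d → Prop := Relation.EqvGen (CDPMove d)

/-- The on-the-nose Fano conditions for a CDP. -/
def IsFanoWitness (d : ℕ) (P : CDP d) : Prop :=
  ∃ a : List ℤ, a.sum = -2 ∧
    (0 : Fin d → ℝ) ∈ interior P.box ∧
    List.Forall₂ (fun f (ai : ℤ) =>
      AtHeightOne d P.box (fun x => f x + (ai : ℝ) + 1) ∧ 0 < f 0 + (ai : ℝ) + 1)
      P.funcs a ∧
    ∀ x ∈ frontier P.box,
      (P.funcs.map (fun f => f x)).sum = 0 ∨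
      ∃ u : Fin d → ℤ, dotZ d x u = 1 ∧ ∀ y ∈ P.box, dotZ d y u ≤ 1

/-- A CDP is Fano if it is equivalent to one satisfying the Fano conditions. -/
def IsFano (d : ℕ) (P : CDP d) : Prop := ∃ Q : CDP d, CDPEquiv d P Q ∧ IsFanoWitness d Q

/-- A CDP is toric if it is equivalent to one with at most two functions. -/
def IsToric (d : ℕ) (P : CDP d) : Prop := ∃ Q : CDP d, CDPEquiv d P Q ∧ Q.funcs.length ≤ 2

/-- `f` agrees on `Box` with an affine function with integral slope and constant. -/
def IsIntegralAffineOn (d : ℕ) (Box : Set (Fin d → ℝ)) (f : (Fin d → ℝ) → ℝ) : Prop :=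
  ∃ (u : Fin d → ℤ) (c : ℤ), ∀ x ∈ Box, f x = dotZ d x u + (c : ℝ)

/-- Normalized Fano data on `Box`: the translated functions `Ψᵢ' = Ψᵢ + aᵢ + 1` of a
normalized Fano CDP. -/
def NormalizedFanoData (d n : ℕ) (Box : Set (Fin d → ℝ))
    (f : Fin n → (Fin d → ℝ) → ℝ) : Prop :=
  (∀ i, IsICPA d Box (f i)) ∧
  (∀ i, AtHeightOne d Box (f i)) ∧
  (∀ i, 0 < f i 0) ∧
  (∀ i, ¬ IsIntegralAffineOn d Box (f i)) ∧
  (∀ x ∈ Box, (n : ℝ) - 2 ≤ ∑ i, f i x) ∧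
  (∀ x ∈ interior Box, (n : ℝ) - 2 < ∑ i, f i x) ∧
  (∀ x ∈ frontier Box,
    (∑ i, f i x) = (n : ℝ) - 2 ∨
    ∃ u : Fin d → ℤ, dotZ d x u = 1 ∧ ∀ y ∈ Box, dotZ d y u ≤ 1)

/-- `α_v = min{1, max{α ≥ 0 : ±αv ∈ Box}}`. -/
def alphaV (d : ℕ) (Box : Set (Fin d → ℝ)) (v : Fin d → ℤ) : ℝ :=
  min 1 (sSup {α : ℝ | 0 ≤ α ∧ (fun i => α * (v i : ℝ)) ∈ Box ∧
    (fun i => -(α * (v i : ℝ))) ∈ Box})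

/-- A primitive integral vector: the gcd of its coordinates is 1. -/
def IsPrimitive (d : ℕ) (v : Fin d → ℤ) : Prop := Finset.univ.gcd v = 1

/-- `f` restricted to `Box ∩ ℝ·v` is affine. -/
def AffineOnLine (d : ℕ) (Box : Set (Fin d → ℝ)) (v : Fin d → ℤ)
    (f : (Fin d → ℝ) → ℝ) : Prop :=
  ∃ s c : ℝ, ∀ t : ℝ, (fun i => t * (v i : ℝ)) ∈ Box →
    f (fun i => t * (v i : ℝ)) = s * t + c

/-- The interval `[a,b]` as a subset of `ℝ¹ = (Fin 1 → ℝ)`. -/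
def intervalBox (a b : ℤ) : Set (Fin 1 → ℝ) := {p : Fin 1 → ℝ | (a : ℝ) ≤ p 0 ∧ p 0 ≤ (b : ℝ)}

/-- The `d`-dimensional cross polytope `conv{±e₁, …, ±e_d}`. -/
def crossPolytope (d : ℕ) : Set (Fin d → ℝ) :=
  convexHull ℝ {x : Fin d → ℝ | ∃ j : Fin d, x = Pi.single j 1 ∨ x = -Pi.single j 1}

/-- Auxiliary: a convex function on `[A,B]` attaining its maximum at an interior point
is constant. -/
theorem aux_const_of_convex {A B t : ℝ} (H : ℝ → ℝ)
    (hconv : ∀ p q μ : ℝ, A ≤ p → p ≤ B → A ≤ q → q ≤ B → 0 ≤ μ → μ ≤ 1 →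
      H (μ * p + (1 - μ) * q) ≤ μ * H p + (1 - μ) * H q)
    (hub : ∀ s, A ≤ s → s ≤ B → H s ≤ H t)
    (ht1 : A < t) (ht2 : t < B) :
    ∀ s, A ≤ s → s ≤ B → H s = H t := by
  intro s hs1 hs2
  rcases lt_trichotomy s t with h | h | h
  · set μ := (B - t) / (B - s) with hμ
    have hBs : (0:ℝ) < B - s := by linarith
    have hμ0 : 0 < μ := div_pos (by linarith) hBs
    have hμ1 : μ < 1 := (div_lt_one hBs).2 (by linarith)
    have hcomb : μ * s + (1 - μ) * B = t := by
      rw [hμ]; field_simp; ring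
    have h1 := hconv s B μ hs1 (by linarith) (by linarith) le_rfl hμ0.le hμ1.le
    rw [hcomb] at h1
    have h3 := hub B (by linarith) le_rfl
    have h4 : μ * H t ≤ μ * H s := by
      nlinarith [mul_le_mul_of_nonneg_left h3 (by linarith : (0:ℝ) ≤ 1 - μ)]
    have h5 := le_of_mul_le_mul_left h4 hμ0
    have h6 := hub s hs1 hs2
    linarith
  · rw [h]
  · set μ := (t - A) / (s - A) with hμ
    have hsA : (0:ℝ) < s - A := by linarith
    have hμ0 : 0 < μ := div_pos (by linarith) hsA
    have hμ1 : μ < 1 := (div_lt_one hsA).2 (by linarith)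
    have hcomb : μ * s + (1 - μ) * A = t := by
      rw [hμ]; field_simp; ring
    have h1 := hconv s A μ hs1 hs2 le_rfl (by linarith) hμ0.le hμ1.le
    rw [hcomb] at h1
    have h3 := hub A le_rfl (by linarith)
    have h4 : μ * H t ≤ μ * H s := by
      nlinarith [mul_le_mul_of_nonneg_left h3 (by linarith : (0:ℝ) ≤ 1 - μ)]
    have h5 := le_of_mul_le_mul_left h4 hμ0
    have h6 := hub s hs1 hs2
    linarith

set_option maxHeartbeats 1000000 in
/-- For a translated function of a normalized two-dimensional Fano CDP on `[a,b]` with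
`a ≤ -1 < 1 ≤ b`, either `f(-1) ≤ 0` or `f(1) ≤ 0`. -/
theorem one_value_nonpositive
    (a b : ℤ) (ha : a ≤ -1) (hb : 1 ≤ b)
    (f : (Fin 1 → ℝ) → ℝ)
    (hicpa : IsICPA 1 (intervalBox a b) f)
    (hht : AtHeightOne 1 (intervalBox a b) f)
    (hf0 : 0 < f 0)
    (hnl : ¬ IsIntegralAffineOn 1 (intervalBox a b) f) :
    f (fun _ => -1) ≤ 0 ∨ f (fun _ => 1) ≤ 0 := by
  by_contra hcon
  push_neg at hcon
  obtain ⟨h1, h2⟩ := hcon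
  obtain ⟨S, hproj, hgr⟩ := hicpa
  set T : Set ((Fin 1 → ℝ) × ℝ) := latticeEmbed 1 '' (S : Set ((Fin 1 → ℤ) × ℤ)) with hT
  set K : Set ((Fin 1 → ℝ) × ℝ) := convexHull ℝ T with hKdef
  set F : ℝ → ℝ := fun t => f (fun _ => t) with hFdef
  have ha0 : (a : ℝ) ≤ -1 := by exact_mod_cast ha
  have hb0 : (1 : ℝ) ≤ (b : ℝ) := by exact_mod_cast hb
  have hmemBox : ∀ s : ℝ, a ≤ s → s ≤ b → (fun _ => s : Fin 1 → ℝ) ∈ intervalBox a b :=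
    fun s h h' => ⟨h, h'⟩
  have hF1 : 0 < F 1 := h2
  have hFm1 : 0 < F (-1) := h1
  have hF00 : 0 < F 0 := hf0
  have hgr' : ∀ s : ℝ, a ≤ s → s ≤ b →
      IsGreatest {t : ℝ | ((fun _ => s : Fin 1 → ℝ), t) ∈ K} (F s) :=
    fun s h h' => hgr _ (hmemBox s h h')
  have hgK : ∀ s : ℝ, a ≤ s → s ≤ b → ((fun _ => s : Fin 1 → ℝ), F s) ∈ K :=
    fun s h h' => (hgr' s h h').1
  have hub : ∀ s : ℝ, a ≤ s → s ≤ b → ∀ t : ℝ, ((fun _ => s : Fin 1 → ℝ), t) ∈ K → t ≤ F s :=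
    fun s h h' t ht => (hgr' s h h').2 ht
  -- concavity of F
  have conc : ∀ s t μ : ℝ, a ≤ s → s ≤ b → a ≤ t → t ≤ b → 0 ≤ μ → μ ≤ 1 →
      μ * F s + (1 - μ) * F t ≤ F (μ * s + (1 - μ) * t) := by
    intro s t μ hs1 hs2 ht1 ht2 hμ0 hμ1
    have hmm : μ • ((fun _ => s : Fin 1 → ℝ), F s) + (1 - μ) • ((fun _ => t : Fin 1 → ℝ), F t) ∈ K :=
      (convex_convexHull ℝ T) (hgK s hs1 hs2) (hgK t ht1 ht2) hμ0 (by linarith) (by ring)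
    have heq : μ • ((fun _ => s : Fin 1 → ℝ), F s) + (1 - μ) • ((fun _ => t : Fin 1 → ℝ), F t)
        = ((fun _ => μ * s + (1 - μ) * t : Fin 1 → ℝ), μ * F s + (1 - μ) * F t) := by
      refine Prod.ext ?_ ?_
      · funext i; simp [Prod.smul_def]
      · simp [Prod.smul_def]
    rw [heq] at hmm
    have hw1 : a ≤ μ * s + (1 - μ) * t := by nlinarith
    have hw2 : μ * s + (1 - μ) * t ≤ b := by nlinarith
    exact hub _ hw1 hw2 _ hmm
  -- certificates in 1-variable form
  have cert : ∀ t : ℝ, a ≤ t → t ≤ b → ∃ U m : ℤ,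
      |t * (U : ℝ) + (m : ℝ) * F t| = 1 ∧
      ∀ s : ℝ, a ≤ s → s ≤ b → s * (U : ℝ) + (m : ℝ) * F s ≤ t * (U : ℝ) + (m : ℝ) * F t := by
    intro t ht1 ht2
    obtain ⟨u, m, hu1, hu2⟩ := hht _ (hmemBox t ht1 ht2)
    refine ⟨u 0, m, ?_, ?_⟩
    · simpa [dotZ] using hu1
    · intro s hs1 hs2
      simpa [dotZ] using hu2 _ (hmemBox s hs1 hs2)
  -- constancy lemma specialized
  have const : ∀ (U m : ℤ) (t : ℝ), (m : ℝ) < 0 → a < t → t < b →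
      (∀ s : ℝ, a ≤ s → s ≤ b → s * (U : ℝ) + (m : ℝ) * F s ≤ t * (U : ℝ) + (m : ℝ) * F t) →
      ∀ s : ℝ, a ≤ s → s ≤ b → s * (U : ℝ) + (m : ℝ) * F s = t * (U : ℝ) + (m : ℝ) * F t := by
    intro U m t hm ht1 ht2 hle
    refine aux_const_of_convex (fun s => s * (U : ℝ) + (m : ℝ) * F s) ?_ hle ht1 ht2
    intro p q μ hp1 hp2 hq1 hq2 hμ0 hμ1
    have hc := conc p q μ hp1 hp2 hq1 hq2 hμ0 hμ1
    have hc2 : (m : ℝ) * F (μ * p + (1 - μ) * q) ≤ (m : ℝ) * (μ * F p + (1 - μ) * F q) :=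
      mul_le_mul_of_nonpos_left hc hm.le
    nlinarith [hc2]
  -- Step 1: F s ≤ F 0 and F 0 ≤ 1
  have step1 : (∀ s : ℝ, a ≤ s → s ≤ b → F s ≤ F 0) ∧ F 0 ≤ 1 := by
    obtain ⟨U, m, habs, hle⟩ := cert 0 (by linarith) (by linarith)
    simp only [zero_mul, zero_add] at habs hle
    rcases lt_trichotomy (m : ℝ) 0 with hm | hm | hm
    · -- convex case: F is constant
      have hcc := const U m 0 hm (by linarith) (by linarith) (by
        intro s hs1 hs2
        simpa using hle s hs1 hs2)
      have hE : (m : ℝ) * F 0 = -1 := by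
        rcases (abs_eq (by norm_num : (0:ℝ) ≤ 1)).1 habs with h | h
        · nlinarith
        · exact h
      have hU0 : (U : ℝ) = 0 := by
        have e1 := hcc 1 (by linarith) (by linarith)
        have e2 := hcc (-1) (by linarith) (by linarith)
        rw [hE] at e1 e2
        have p1 : (m : ℝ) * F 1 < 0 := mul_neg_of_neg_of_pos hm hF1
        have p2 : (m : ℝ) * F (-1) < 0 := mul_neg_of_neg_of_pos hm hFm1
        have g1 : (U : ℝ) < 1 := by linarith
        have g2 : (-1 : ℝ) < (U : ℝ) := by linarith
        have g1' : U < 1 := by exact_mod_cast g1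
        have g2' : -1 < U := by exact_mod_cast g2
        have : U = 0 := by omega
        exact_mod_cast this
      have hmle : (m : ℝ) ≤ -1 := by
        have : m < 0 := by exact_mod_cast hm
        have : m ≤ -1 := by omega
        exact_mod_cast this
      constructor
      · intro s hs1 hs2
        have hc := hcc s hs1 hs2
        rw [hU0] at hc
        have h' : (m : ℝ) * F s = (m : ℝ) * F 0 := by linarith
        have := mul_left_cancel₀ hm.ne h'
        linarith
      · nlinarith [hE, hmle, hF00]
    · exfalso
      rw [hm, zero_mul] at habs
      simp at habs
    · -- m > 0
      have hm1 : (1 : ℝ) ≤ (m : ℝ) := by exact_mod_cast (by exact_mod_cast hm : (0:ℤ) < m)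
      have hE : (m : ℝ) * F 0 = 1 := by
        rcases (abs_eq (by norm_num : (0:ℝ) ≤ 1)).1 habs with h | h
        · exact h
        · nlinarith
      have hU0 : (U : ℝ) = 0 := by
        have e1 := hle 1 (by linarith) (by linarith)
        have e2 := hle (-1) (by linarith) (by linarith)
        rw [hE] at e1 e2
        have p1 : (0:ℝ) < (m : ℝ) * F 1 := mul_pos hm hF1
        have p2 : (0:ℝ) < (m : ℝ) * F (-1) := mul_pos hm hFm1
        have g1 : (U : ℝ) < 1 := by linarith
        have g2 : (-1 : ℝ) < (U : ℝ) := by linarith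
        have g1' : U < 1 := by exact_mod_cast g1
        have g2' : -1 < U := by exact_mod_cast g2
        have : U = 0 := by omega
        exact_mod_cast this
      constructor
      · intro s hs1 hs2
        have := hle s hs1 hs2
        rw [hU0, mul_zero, zero_add, hE] at this
        have : (m : ℝ) * F s ≤ (m : ℝ) * F 0 := by rw [hE]; linarith
        exact le_of_mul_le_mul_left this hm
      · nlinarith
  obtain ⟨hmax, hle1⟩ := step1
  -- Step 2: F 0 = 1 via lattice points
  have hF0 : F 0 = 1 := by
    have h0K : ((fun _ => (0:ℝ) : Fin 1 → ℝ), F 0) ∈ K := hgK 0 (by linarith) (by linarith)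
    have hTne : T.Nonempty := by
      rw [← convexHull_nonempty_iff (𝕜 := ℝ)]
      exact ⟨_, h0K⟩
    have hSne : S.Nonempty := by
      obtain ⟨p, q, hq, _⟩ := hTne
      exact ⟨q, hq⟩
    set M : ℤ := S.sup' hSne (fun p => p.2) with hM
    have hKle : ∀ p ∈ K, p.2 ≤ (M : ℝ) := by
      intro p hp
      refine convexHull_min ?_
        (convex_halfSpace_le (LinearMap.snd ℝ (Fin 1 → ℝ) ℝ).isLinear (M:ℝ)) hp
      rintro _ ⟨⟨v, q⟩, hq, rfl⟩
      show ((q : ℤ) : ℝ) ≤ (M : ℝ)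
      exact_mod_cast Finset.le_sup' (fun p => p.2) hq
    have hf0M : F 0 ≤ (M : ℝ) := hKle _ h0K
    obtain ⟨p₀, hp₀, hMp⟩ := Finset.exists_mem_eq_sup' hSne (fun p => p.2)
    have hp₀K : latticeEmbed 1 p₀ ∈ K :=
      subset_convexHull ℝ T ⟨p₀, Finset.mem_coe.2 hp₀, rfl⟩
    have hfst : (fun i => ((p₀.1 i : ℤ) : ℝ)) ∈ intervalBox a b := by
      have := Set.mem_image_of_mem Prod.fst hp₀K
      rw [hproj] at this
      exact this
    have hpt : (fun i : Fin 1 => ((p₀.1 i : ℤ) : ℝ)) = (fun _ => ((p₀.1 0 : ℤ) : ℝ)) :=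
      funext fun i => by rw [Subsingleton.elim i 0]
    have hc1 : (a : ℝ) ≤ ((p₀.1 0 : ℤ) : ℝ) := hfst.1
    have hc2 : ((p₀.1 0 : ℤ) : ℝ) ≤ (b : ℝ) := hfst.2
    have hqle : ((p₀.2 : ℤ) : ℝ) ≤ F ((p₀.1 0 : ℤ) : ℝ) := by
      apply hub _ hc1 hc2
      have : ((fun _ => ((p₀.1 0 : ℤ) : ℝ) : Fin 1 → ℝ), ((p₀.2 : ℤ) : ℝ)) = latticeEmbed 1 p₀ := by
        refine Prod.ext ?_ rfl
        rw [← hpt]; rfl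
      rw [this]
      exact hp₀K
    have hMle : (M : ℝ) ≤ F 0 := by
      rw [hM, hMp]
      exact le_trans hqle (hmax _ hc1 hc2)
    have hFM : F 0 = (M : ℝ) := le_antisymm hf0M hMle
    have hM1 : M = 1 := by
      have hMpos : (0 : ℝ) < (M : ℝ) := by rw [← hFM]; exact hF00
      have hMle1 : (M : ℝ) ≤ 1 := by rw [← hFM]; exact hle1
      have g1 : 0 < M := by exact_mod_cast hMpos
      have g2 : M ≤ 1 := by exact_mod_cast hMle1
      omega
    rw [hFM, hM1]; norm_num
  -- Step 3: F t = 1 on the open interval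
  have hIoo : ∀ t : ℝ, a < t → t < b → F t = 1 := by
    intro t ht1 ht2
    by_contra hne
    have hFt : F t < 1 := lt_of_le_of_ne (by rw [← hF0]; exact hmax t ht1.le ht2.le) hne
    obtain ⟨U, m, habs, hle⟩ := cert t ht1.le ht2.le
    set E : ℝ := t * (U : ℝ) + (m : ℝ) * F t with hE
    have hm_le : (m : ℝ) ≤ E := by
      have := hle 0 (by linarith) (by linarith)
      rw [hF0] at this
      simpa using this
    have hEpm : E = 1 ∨ E = -1 := (abs_eq (by norm_num : (0:ℝ) ≤ 1)).1 habs
    rcases lt_trichotomy (m : ℝ) 0 with hm | hm | hm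
    · -- m < 0 : constancy
      have hcc := const U m t hm ht1 ht2 hle
      have e0 := hcc 0 (by linarith) (by linarith)
      rw [hF0, zero_mul, zero_add, mul_one] at e0
      -- (m:ℝ) = E, so m = -1, E = -1
      have hmE : (m : ℝ) = E := e0
      have hEm1 : E = -1 := by
        rcases hEpm with h | h
        · exfalso; rw [h] at hmE; linarith
        · exact h
      have hmm1 : (m : ℝ) = -1 := by rw [hmE, hEm1]
      have e1 := hcc 1 (by linarith) (by linarith)
      have e2 := hcc (-1) (by linarith) (by linarith)
      rw [← hE, hEm1, hmm1] at e1 e2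
      -- e1 : 1*U + -1 * F 1 = -1, e2 : -1*U + -1 * F(-1) = -1
      have g1 : (U : ℝ) < 1 := by linarith
      have g2 : (-1 : ℝ) < (U : ℝ) := by linarith
      have g1' : U < 1 := by exact_mod_cast g1
      have g2' : -1 < U := by exact_mod_cast g2
      have hU0 : U = 0 := by omega
      have hU0' : (U : ℝ) = 0 := by exact_mod_cast hU0
      have hEt : E = t * (U : ℝ) + (m : ℝ) * F t := hE
      rw [hEm1, hU0', hmm1] at hEt
      linarith
    · -- m = 0
      have hE0 : E = t * (U : ℝ) := by rw [hE, hm, zero_mul, add_zero]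
      have hE1 : E = 1 := by
        rcases hEpm with h | h
        · exact h
        · exfalso; rw [hm] at hm_le; rw [h] at hm_le; linarith
      have htU : t * (U : ℝ) = 1 := by rw [← hE0, hE1]
      have hles : ∀ s : ℝ, a ≤ s → s ≤ b → s * (U : ℝ) ≤ 1 := by
        intro s hs1 hs2
        have h' := hle s hs1 hs2
        rw [hm, hE1] at h'
        linarith
      rcases lt_trichotomy t 0 with htn | htz | htp
      · have hUneg : (U : ℝ) < 0 := by
          rcases lt_trichotomy (U : ℝ) 0 with h | h | h
          · exact h
          · exfalso; rw [h, mul_zero] at htU; norm_num at htU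
          · exfalso; nlinarith
        have hUle : (U : ℝ) ≤ -1 := by
          have : U < 0 := by exact_mod_cast hUneg
          have : U ≤ -1 := by omega
          exact_mod_cast this
        have hm1U := hles (-1) (by linarith) (by linarith)
        -- -U ≤ 1 so U ≥ -1, hence U = -1, t = -1
        have hUm1 : (U : ℝ) = -1 := by linarith
        have htm1 : t = -1 := by
          rw [hUm1] at htU; linarith
        have haU := hles a le_rfl (by linarith)
        rw [hUm1] at haU
        -- a * -1 ≤ 1 so a ≥ -1, so a = -1 = t, contradicting a < t
        have : (a : ℝ) ≥ -1 := by linarith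
        rw [htm1] at ht1
        linarith
      · rw [htz, zero_mul] at htU; norm_num at htU
      · have hUpos : (0:ℝ) < (U : ℝ) := by
          rcases lt_trichotomy (U : ℝ) 0 with h | h | h
          · exfalso; nlinarith
          · exfalso; rw [h, mul_zero] at htU; norm_num at htU
          · exact h
        have hUge : (1:ℝ) ≤ (U : ℝ) := by
          have : 0 < U := by exact_mod_cast hUpos
          have : 1 ≤ U := by omega
          exact_mod_cast this
        have h1U := hles 1 (by linarith) (by linarith)
        rw [one_mul] at h1U
        have hU1 : (U : ℝ) = 1 := le_antisymm h1U hUge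
        have ht1' : t = 1 := by rw [hU1, mul_one] at htU; exact htU
        have hbU := hles b (by linarith) le_rfl
        rw [hU1, mul_one] at hbU
        rw [ht1'] at ht2
        linarith
    · -- m > 0
      have hm1 : (1 : ℝ) ≤ (m : ℝ) := by
        have : 0 < m := by exact_mod_cast hm
        have : 1 ≤ m := by omega
        exact_mod_cast this
      have hE1 : E = 1 := by
        rcases hEpm with h | h
        · exact h
        · exfalso; rw [h] at hm_le; linarith
      have hmeq : (m : ℝ) = 1 := le_antisymm (by rw [← hE1]; exact hm_le) hm1
      have htU : 0 < t * (U : ℝ) := by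
        have h5 : t * (U : ℝ) + (m : ℝ) * F t = 1 := by rw [← hE, hE1]
        rw [hmeq] at h5
        linarith
      rcases lt_trichotomy t 0 with htn | htz | htp
      · have hUneg : (U : ℝ) < 0 := by nlinarith
        have hUle : (U : ℝ) ≤ -1 := by
          have : U < 0 := by exact_mod_cast hUneg
          have : U ≤ -1 := by omega
          exact_mod_cast this
        have h' := hle (-1) (by linarith) (by linarith)
        rw [hmeq, hE1] at h'
        linarith
      · rw [htz, zero_mul] at htU; norm_num at htU
      · have hUpos : (0:ℝ) < (U : ℝ) := by nlinarith
        have hUge : (1:ℝ) ≤ (U : ℝ) := by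
          have : 0 < U := by exact_mod_cast hUpos
          have : 1 ≤ U := by omega
          exact_mod_cast this
        have h' := hle 1 (by linarith) (by linarith)
        rw [hmeq, hE1] at h'
        linarith
  -- Step 4: upgrade to closed interval via closedness of K
  have hKcl : IsClosed K := by
    rw [hKdef, hT]
    exact ((S.finite_toSet.image _).isCompact_convexHull ℝ).isClosed
  have hK1 : ∀ c : ℝ, a ≤ c → c ≤ b → ((fun _ => c : Fin 1 → ℝ), (1:ℝ)) ∈ K := by
    have hg : Continuous (fun s : ℝ => ((fun _ => s : Fin 1 → ℝ), (1:ℝ))) :=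
      (continuous_pi fun _ => continuous_id).prodMk continuous_const
    intro c hc1 hc2
    have hab : (a : ℝ) ≠ (b : ℝ) := by linarith
    have hcIcc : c ∈ closure (Set.Ioo (a:ℝ) b) := by
      rw [closure_Ioo hab]
      exact ⟨hc1, hc2⟩
    have h1 : ((fun _ => c : Fin 1 → ℝ), (1:ℝ)) ∈
        (fun s : ℝ => ((fun _ => s : Fin 1 → ℝ), (1:ℝ))) '' closure (Set.Ioo (a:ℝ) b) :=
      ⟨c, hcIcc, rfl⟩
    have h2 := image_closure_subset_closure_image hg h1
    have h3 : (fun s : ℝ => ((fun _ => s : Fin 1 → ℝ), (1:ℝ))) '' Set.Ioo (a:ℝ) b ⊆ K := by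
      rintro _ ⟨s, hs, rfl⟩
      have := hIoo s hs.1 hs.2
      rw [← this]
      exact hgK s hs.1.le hs.2.le
    have h4 := closure_mono h3 h2
    rwa [hKcl.closure_eq] at h4
  -- Conclusion: f ≡ 1 on Box, contradicting hnl
  apply hnl
  refine ⟨fun _ => 0, 1, ?_⟩
  intro x hx
  have hxeq : x = (fun _ => x 0) := funext fun i => by rw [Subsingleton.elim i 0]
  have hx1 : (a : ℝ) ≤ x 0 := hx.1
  have hx2 : x 0 ≤ (b : ℝ) := hx.2
  have hge : 1 ≤ F (x 0) := hub _ hx1 hx2 1 (hK1 _ hx1 hx2)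
  have hle' : F (x 0) ≤ 1 := by rw [← hF0]; exact hmax _ hx1 hx2
  have hfx : f x = 1 := by
    rw [hxeq]
    exact le_antisymm hle' hge
  rw [hfx]
  simp [dotZ]

end
end

section
/- Let a, b ∈ ℤ with a ≤ −1 and b ≥ 1, and let Box = [a,b] ⊆ ℝ. Let f be an integral concave piecewise-affine function on Box which is at height one, satisfies f(0) > 0, and is not of the form x ↦ u·x + c with u, c ∈ ℤ. If f(1) > −1, then f(−1) ≤ 1; similarly, if f(−1) > −1, then f(1) ≤ 1. -/
open scoped BigOperators

noncomputable section

set_option maxHeartbeats 1000000 in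
private lemma aux_core_value (a b : ℤ) (ha : a ≤ -1) (hb : 1 ≤ b) (f : (Fin 1 → ℝ) → ℝ)
    (hicpa : IsICPA 1 (intervalBox a b) f)
    (hht : AtHeightOne 1 (intervalBox a b) f)
    (hf0 : 0 < f 0)
    (hnl : ¬ IsIntegralAffineOn 1 (intervalBox a b) f)
    (σ : ℤ) (hσ : σ = 1 ∨ σ = -1)
    (h1 : (-1:ℝ) < f (fun _ => (σ:ℝ)))
    (h2 : (1:ℝ) < f (fun _ => -(σ:ℝ))) : False := by
  obtain ⟨S, hbox, hgr⟩ := hicpa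
  set K := convexHull ℝ (latticeEmbed 1 '' (S : Set ((Fin 1 → ℤ) × ℤ))) with hK
  set F : ℝ → ℝ := fun s => f (fun _ => s) with hF
  have hab : (a:ℝ) ≤ -1 := by exact_mod_cast ha
  have hbb : (1:ℝ) ≤ (b:ℝ) := by exact_mod_cast hb
  have hσr : (σ:ℝ) = 1 ∨ (σ:ℝ) = -1 := by
    rcases hσ with h | h <;> [left; right] <;> rw [h] <;> norm_num
  have hσ2 : (σ:ℝ) * (σ:ℝ) = 1 := by rcases hσr with h | h <;> rw [h] <;> norm_num
  have hσlb : (-1:ℝ) ≤ (σ:ℝ) := by rcases hσr with h | h <;> rw [h] <;> norm_num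
  have hσub : (σ:ℝ) ≤ 1 := by rcases hσr with h | h <;> rw [h] <;> norm_num
  have hmem : ∀ s : ℝ, (a:ℝ) ≤ s → s ≤ (b:ℝ) → (fun _ => s) ∈ intervalBox a b :=
    fun s hs1 hs2 => ⟨hs1, hs2⟩
  have hFmem : ∀ s : ℝ, (a:ℝ) ≤ s → s ≤ (b:ℝ) → ((fun _ => s : Fin 1 → ℝ), F s) ∈ K :=
    fun s hs1 hs2 => (hgr _ (hmem s hs1 hs2)).1
  have hFub : ∀ s : ℝ, (a:ℝ) ≤ s → s ≤ (b:ℝ) → ∀ t : ℝ,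
      ((fun _ => s : Fin 1 → ℝ), t) ∈ K → t ≤ F s :=
    fun s hs1 hs2 t ht => (hgr _ (hmem s hs1 hs2)).2 ht
  have hf0' : 0 < F 0 := hf0
  have h1' : (-1:ℝ) < F σ := h1
  have h2' : (1:ℝ) < F (-(σ:ℝ)) := h2
  -- height-one in 1-variable form
  have hht' : ∀ s : ℝ, (a:ℝ) ≤ s → s ≤ (b:ℝ) → ∃ (u m : ℤ),
      |s * (u:ℝ) + (m:ℝ) * F s| = 1 ∧
      ∀ y : ℝ, (a:ℝ) ≤ y → y ≤ (b:ℝ) →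
        y * (u:ℝ) + (m:ℝ) * F y ≤ s * (u:ℝ) + (m:ℝ) * F s := by
    intro s hs1 hs2
    obtain ⟨u, m, habs, hmax⟩ := hht (fun _ => s) (hmem s hs1 hs2)
    refine ⟨u 0, m, ?_, ?_⟩
    · simpa [dotZ] using habs
    · intro y hy1 hy2
      simpa [dotZ] using hmax (fun _ => y) (hmem y hy1 hy2)
  -- concavity
  have hconc : ∀ x y t : ℝ, (a:ℝ) ≤ x → x ≤ b → (a:ℝ) ≤ y → y ≤ b → 0 ≤ t → t ≤ 1 →
      t * F x + (1-t) * F y ≤ F (t*x + (1-t)*y) := by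
    intro x y t hx1 hx2 hy1 hy2 ht0 ht1
    have hzK : ((fun _ => t*x + (1-t)*y : Fin 1 → ℝ), t * F x + (1-t) * F y) ∈ K := by
      have hh := (convex_convexHull ℝ (latticeEmbed 1 '' (S : Set ((Fin 1 → ℤ) × ℤ))))
        (hFmem x hx1 hx2) (hFmem y hy1 hy2) ht0 (by linarith : (0:ℝ) ≤ 1 - t)
        (by ring : t + (1 - t) = 1)
      have hcomb : t • ((fun _ => x : Fin 1 → ℝ), F x) + (1-t) • ((fun _ => y : Fin 1 → ℝ), F y)
          = ((fun _ => t*x + (1-t)*y : Fin 1 → ℝ), t * F x + (1-t) * F y) := by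
        apply Prod.ext
        · funext i; simp [Pi.smul_apply, smul_eq_mul]
        · simp [smul_eq_mul]
      rw [hcomb] at hh
      exact hh
    have hb1 : (a:ℝ) ≤ t*x + (1-t)*y := by nlinarith
    have hb2 : t*x + (1-t)*y ≤ (b:ℝ) := by nlinarith
    exact hFub _ hb1 hb2 _ hzK
  -- constancy lemma for m < 0
  have hconst : ∀ (u m : ℝ), m < 0 → ∀ x : ℝ, (a:ℝ) < x → x < (b:ℝ) →
      (∀ y : ℝ, (a:ℝ) ≤ y → y ≤ b → y*u + m*F y ≤ x*u + m*F x) →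
      ∀ y : ℝ, (a:ℝ) ≤ y → y ≤ b → y*u + m*F y = x*u + m*F x := by
    intro u m hm x hax hxb hmax y hy1 hy2
    rcases lt_trichotomy y x with hyx | rfl | hyx
    · set t := (b - x)/(b - y) with hts
      have hby : (0:ℝ) < b - y := by linarith
      have ht0 : 0 < t := div_pos (by linarith) hby
      have ht1 : t ≤ 1 := by rw [div_le_one hby]; linarith
      have hxc : x = t*y + (1-t)*(b:ℝ) := by rw [hts]; field_simp; ring
      have hc := hconc y b t hy1 hy2 (by linarith) le_rfl ht0.le ht1
      rw [← hxc] at hc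
      have hb' := hmax b (by linarith) le_rfl
      have h5 : m * F x ≤ m * (t * F y + (1-t) * F b) := mul_le_mul_of_nonpos_left hc hm.le
      have key : x*u + m*F x ≤ t*(y*u + m*F y) + (1-t)*((b:ℝ)*u + m*F b) := by
        calc x*u + m*F x ≤ x*u + m*(t*F y + (1-t)*F b) := by linarith
        _ = t*(y*u + m*F y) + (1-t)*((b:ℝ)*u + m*F b) := by rw [hxc]; ring
      have key2 : t*(x*u + m*F x) ≤ t*(y*u + m*F y) := by
        nlinarith [key, mul_le_mul_of_nonneg_left hb' (by linarith : (0:ℝ) ≤ 1 - t)]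
      have := (mul_le_mul_iff_right₀ ht0).1 key2
      linarith [hmax y hy1 hy2]
    · rfl
    · set t := (x - a)/(y - a) with hts
      have hya : (0:ℝ) < y - a := by linarith
      have ht0 : 0 < t := div_pos (by linarith) hya
      have ht1 : t ≤ 1 := by rw [div_le_one hya]; linarith
      have hxc : x = t*y + (1-t)*(a:ℝ) := by rw [hts]; field_simp; ring
      have hc := hconc y a t hy1 hy2 le_rfl (by linarith) ht0.le ht1
      rw [← hxc] at hc
      have hb' := hmax a le_rfl (by linarith)
      have h5 : m * F x ≤ m * (t * F y + (1-t) * F a) := mul_le_mul_of_nonpos_left hc hm.le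
      have key : x*u + m*F x ≤ t*(y*u + m*F y) + (1-t)*((a:ℝ)*u + m*F a) := by
        calc x*u + m*F x ≤ x*u + m*(t*F y + (1-t)*F a) := by linarith
        _ = t*(y*u + m*F y) + (1-t)*((a:ℝ)*u + m*F a) := by rw [hxc]; ring
      have key2 : t*(x*u + m*F x) ≤ t*(y*u + m*F y) := by
        nlinarith [key, mul_le_mul_of_nonneg_left hb' (by linarith : (0:ℝ) ≤ 1 - t)]
      have := (mul_le_mul_iff_right₀ ht0).1 key2
      linarith [hmax y hy1 hy2]
  -- integrality of F b
  have hFbZ : ∃ z : ℤ, F b = (z:ℝ) := by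
    classical
    set T := S.image (latticeEmbed 1) with hT
    have hset : latticeEmbed 1 '' (S : Set ((Fin 1 → ℤ) × ℤ)) = (T : Set ((Fin 1 → ℝ) × ℝ)) := by
      rw [hT, Finset.coe_image]
    have hbB : ((fun _ => (b:ℝ) : Fin 1 → ℝ), F b) ∈ convexHull ℝ (T : Set ((Fin 1 → ℝ) × ℝ)) := by
      rw [← hset]; exact hFmem (b:ℝ) (by linarith) le_rfl
    rw [Finset.mem_convexHull] at hbB
    obtain ⟨w, hw0, hw1, hcm⟩ := hbB
    rw [Finset.centerMass_eq_of_sum_1 _ _ hw1] at hcm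
    have hfst : ∑ q ∈ T, w q * q.1 0 = (b:ℝ) := by
      have h := congrArg (fun p : (Fin 1 → ℝ) × ℝ => p.1 0) hcm
      simpa [Prod.fst_sum, Finset.sum_apply] using h
    have hsnd : ∑ q ∈ T, w q * q.2 = F b := by
      have h := congrArg (fun p : (Fin 1 → ℝ) × ℝ => p.2) hcm
      simpa [Prod.snd_sum] using h
    have hqb : ∀ q ∈ T, q.1 0 ≤ (b:ℝ) := by
      intro q hq
      have hqK : q ∈ K := by
        rw [hK]; exact subset_convexHull ℝ _ (by rw [hset]; exact Finset.mem_coe.2 hq)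
      have hqBox : q.1 ∈ intervalBox a b := by
        rw [← hbox]; exact ⟨q, hqK, rfl⟩
      exact hqBox.2
    have hzero : ∑ q ∈ T, w q * ((b:ℝ) - q.1 0) = 0 := by
      have e : ∀ q ∈ T, w q * ((b:ℝ) - q.1 0) = w q * (b:ℝ) - w q * q.1 0 := by intros; ring
      rw [Finset.sum_congr rfl e, Finset.sum_sub_distrib, ← Finset.sum_mul, hw1, hfst]
      ring
    have hsupp : ∀ q ∈ T, w q ≠ 0 → q.1 0 = (b:ℝ) := by
      intro q hq hne
      have hterm := (Finset.sum_eq_zero_iff_of_nonneg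
        (fun q hq => mul_nonneg (hw0 q hq) (sub_nonneg.2 (hqb q hq)))).1 hzero q hq
      rcases mul_eq_zero.1 hterm with h | h
      · exact absurd h hne
      · linarith
    have hle : ∀ q ∈ T, w q ≠ 0 → q.2 ≤ F b := by
      intro q hq hne
      have hq1 : q.1 = (fun _ => (b:ℝ) : Fin 1 → ℝ) := funext fun i => by
        rw [Subsingleton.elim i (0 : Fin 1)]; exact hsupp q hq hne
      have hqK : ((fun _ => (b:ℝ) : Fin 1 → ℝ), q.2) ∈ K := by
        rw [← hq1]
        rw [hK]; exact subset_convexHull ℝ _ (by rw [hset]; exact Finset.mem_coe.2 hq)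
      exact hFub (b:ℝ) (by linarith) le_rfl q.2 hqK
    have hzero2 : ∑ q ∈ T, w q * (F b - q.2) = 0 := by
      have e : ∀ q ∈ T, w q * (F b - q.2) = w q * (F b) - w q * q.2 := by intros; ring
      rw [Finset.sum_congr rfl e, Finset.sum_sub_distrib, ← Finset.sum_mul, hw1, hsnd]
      ring
    obtain ⟨q, hqT, hwne⟩ := Finset.exists_ne_zero_of_sum_ne_zero
      (by rw [hw1]; norm_num : ∑ q ∈ T, w q ≠ 0)
    have hterm := (Finset.sum_eq_zero_iff_of_nonneg (fun q hq => by
        rcases eq_or_ne (w q) 0 with h | h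
        · rw [h, zero_mul]
        · exact mul_nonneg (hw0 q hq) (sub_nonneg.2 (hle q hq h)))).1 hzero2 q hqT
    have hq2 : q.2 = F b := by
      rcases mul_eq_zero.1 hterm with h | h
      · exact absurd h hwne
      · linarith
    obtain ⟨p, hp, hpq⟩ := Finset.mem_image.1 hqT
    exact ⟨p.2, by rw [← hq2, ← hpq]; rfl⟩
  -- finishing lemma
  have hfinish : ∀ K0 : ℤ, 1 ≤ K0 → (∀ y : ℝ, (a:ℝ) ≤ y → y ≤ b → F y = 1/(K0:ℝ) - σ*y) → False := by
    intro K0 hK0 hall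
    obtain ⟨z, hz⟩ := hFbZ
    have hzb : (z:ℝ) = 1/(K0:ℝ) - σ*b := by rw [← hz]; exact hall b (by linarith) le_rfl
    have hK0pos : (0:ℝ) < (K0:ℝ) := by exact_mod_cast hK0
    have hw : (1:ℝ)/(K0:ℝ) = ((z + σ*b : ℤ):ℝ) := by push_cast; linarith
    have hw1 : (0:ℝ) < ((z + σ*b : ℤ):ℝ) := by rw [← hw]; positivity
    have hw2 : ((z + σ*b : ℤ):ℝ) ≤ 1 := by
      rw [← hw, div_le_one hK0pos]; exact_mod_cast hK0
    have hwz : z + σ*b = 1 := by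
      have h1 : 0 < z + σ*b := by exact_mod_cast hw1
      have h2 : z + σ*b ≤ 1 := by exact_mod_cast hw2
      omega
    have hne : (K0:ℝ) ≠ 0 := ne_of_gt hK0pos
    have h1K : (1:ℝ)/(K0:ℝ) = 1 := by rw [hw, hwz]; norm_num
    have hK0eq : (K0:ℝ) = 1 := by field_simp [hne] at h1K; linarith
    apply hnl
    refine ⟨fun _ => -σ, 1, ?_⟩
    intro x hx
    have hx0 : x = fun _ => x 0 := funext fun i => by rw [Subsingleton.elim i 0]
    have hfx : f x = F (x 0) := by rw [hF]; exact congrArg f hx0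
    rw [hfx, hall (x 0) hx.1 hx.2, hK0eq]
    simp [dotZ]
    ring
  -- main argument: height one at 0
  obtain ⟨u₀, m₀, habs₀, hmax₀⟩ := hht' 0 (by linarith) (by linarith)
  rw [show (0:ℝ) * (u₀:ℝ) + (m₀:ℝ) * F 0 = (m₀:ℝ) * F 0 by ring] at habs₀
  have hmax₀' : ∀ y : ℝ, (a:ℝ) ≤ y → y ≤ b →
      y * (u₀:ℝ) + (m₀:ℝ) * F y ≤ (m₀:ℝ) * F 0 := by
    intro y hy1 hy2; have := hmax₀ y hy1 hy2; linarith
  rcases lt_trichotomy m₀ 0 with hm | hm | hm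
  · -- m₀ < 0 : F affine
    have hmr : (m₀:ℝ) < 0 := by exact_mod_cast hm
    have hcst := hconst (u₀:ℝ) (m₀:ℝ) hmr 0 (by linarith) (by linarith)
      (by intro y hy1 hy2; have := hmax₀' y hy1 hy2; linarith)
    have heps : (m₀:ℝ) * F 0 = -1 := by
      have hneg : (m₀:ℝ) * F 0 < 0 := mul_neg_of_neg_of_pos hmr hf0'
      rcases abs_eq (by norm_num : (0:ℝ) ≤ 1) |>.1 habs₀ with h | h
      · linarith
      · exact h
    have hcσ : (σ:ℝ)*(u₀:ℝ) + (m₀:ℝ) * F σ = -1 := by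
      have := hcst σ (by linarith) (by linarith); linarith
    have hcmσ : -(σ:ℝ)*(u₀:ℝ) + (m₀:ℝ) * F (-(σ:ℝ)) = -1 := by
      have := hcst (-(σ:ℝ)) (by linarith) (by linarith); linarith
    -- bounds on σ u₀
    have hub' : (σ:ℝ)*(u₀:ℝ) < (m₀:ℝ) + 1 := by
      have := mul_lt_mul_of_neg_left h2' hmr
      linarith
    have hlb' : (m₀:ℝ) - 1 < (σ:ℝ)*(u₀:ℝ) := by
      have := mul_lt_mul_of_neg_left h1' hmr
      linarith
    have hsu : σ * u₀ = m₀ := by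
      have hu1 : (m₀ - 1 : ℤ) < σ * u₀ := by exact_mod_cast (by push_cast; linarith : ((m₀ - 1 : ℤ):ℝ) < ((σ*u₀ : ℤ):ℝ))
      have hu2 : (σ * u₀ : ℤ) < m₀ + 1 := by exact_mod_cast (by push_cast; linarith : ((σ*u₀ : ℤ):ℝ) < ((m₀ + 1 : ℤ):ℝ))
      omega
    have hu₀ : u₀ = σ * m₀ := by rcases hσ with h | h <;> subst h <;> omega
    have hall : ∀ y : ℝ, (a:ℝ) ≤ y → y ≤ b → F y = 1/((-m₀ : ℤ):ℝ) - σ*y := by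
      intro y hy1 hy2
      have hthis := hcst y hy1 hy2
      rw [hu₀] at hthis
      push_cast at hthis
      have hm0 : (m₀:ℝ) ≠ 0 := ne_of_lt hmr
      have hFy : F y = (-1 - y*((σ:ℝ)*(m₀:ℝ)))/(m₀:ℝ) := by
        rw [eq_div_iff hm0]; linear_combination hthis + heps
      push_cast
      rw [hFy, one_div, inv_neg, ← one_div, div_eq_iff hm0]
      have hinv : (1/(m₀:ℝ)) * (m₀:ℝ) = 1 := by field_simp
      linear_combination hinv
    exact hfinish (-m₀) (by omega) hall
  · subst hm; simp at habs₀
  · -- m₀ > 0 : main case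
    have hmr : (0:ℝ) < (m₀:ℝ) := by exact_mod_cast hm
    have heps : (m₀:ℝ) * F 0 = 1 := by
      have hpos : 0 < (m₀:ℝ) * F 0 := mul_pos hmr hf0'
      rcases abs_eq (by norm_num : (0:ℝ) ≤ 1) |>.1 habs₀ with h | h
      · exact h
      · linarith
    have hF0 : F 0 = 1/(m₀:ℝ) := by field_simp; linarith
    -- pin down u₀ = σ m₀
    have hA1 := hmax₀' (-(σ:ℝ)) (by linarith) (by linarith)
    have hA2 := hmax₀' (σ:ℝ) (by linarith) (by linarith)
    have hlb' : (m₀:ℝ) - 1 < (σ:ℝ)*(u₀:ℝ) := by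
      have hp1 := mul_lt_mul_of_pos_left h2' hmr
      nlinarith [hA1, heps]
    have hub' : (σ:ℝ)*(u₀:ℝ) < (m₀:ℝ) + 1 := by
      have hp1 := mul_lt_mul_of_pos_left h1' hmr
      nlinarith [hA2, heps]
    have hsu : σ * u₀ = m₀ := by
      have hu1 : (m₀ - 1 : ℤ) < σ * u₀ := by exact_mod_cast (by push_cast; linarith : ((m₀ - 1 : ℤ):ℝ) < ((σ*u₀ : ℤ):ℝ))
      have hu2 : (σ * u₀ : ℤ) < m₀ + 1 := by exact_mod_cast (by push_cast; linarith : ((σ*u₀ : ℤ):ℝ) < ((m₀ + 1 : ℤ):ℝ))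
      omega
    have hu₀ : u₀ = σ * m₀ := by rcases hσ with h | h <;> subst h <;> omega
    have hu₀r : (u₀:ℝ) = (σ:ℝ) * (m₀:ℝ) := by exact_mod_cast hu₀
    have G : ∀ y : ℝ, (a:ℝ) ≤ y → y ≤ b → (σ:ℝ)*y + F y ≤ 1/(m₀:ℝ) := by
      intro y hy1 hy2
      have := hmax₀' y hy1 hy2
      rw [hu₀r] at this
      rw [le_div_iff₀ hmr]
      nlinarith
    -- Part 2: interior values
    have hA : ∀ x : ℝ, (a:ℝ) < x → x < (b:ℝ) → F x = 1/(m₀:ℝ) - (σ:ℝ)*x := by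
      intro x hax hxb
      obtain ⟨u₂, m₂, habs₂, hmax₂⟩ := hht' x hax.le hxb.le
      rcases lt_trichotomy m₂ 0 with hm2 | hm2 | hm2
      · -- m₂ < 0 : constant functional, F affine
        have hm2r : (m₂:ℝ) < 0 := by exact_mod_cast hm2
        have hm2ne : (m₂:ℝ) ≠ 0 := ne_of_lt hm2r
        have hcst := hconst (u₂:ℝ) (m₂:ℝ) hm2r x hax hxb hmax₂
        have hc0 := hcst 0 (by linarith) (by linarith)
        have hcσ := hcst (σ:ℝ) (by linarith) (by linarith)
        have hcmσ := hcst (-(σ:ℝ)) (by linarith) (by linarith)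
        have hGσ := G (σ:ℝ) (by linarith) (by linarith)
        have hGmσ := G (-(σ:ℝ)) (by linarith) (by linarith)
        have hFσle : F (σ:ℝ) ≤ F 0 - 1 := by
          rw [hF0]; linarith [hGσ, hσ2]
        have hFmσle : F (-(σ:ℝ)) ≤ F 0 + 1 := by
          rw [hF0]; linarith [hGmσ, hσ2]
        have e1 : (σ:ℝ) * (u₂:ℝ) = (m₂:ℝ) * (F 0 - F (σ:ℝ)) := by
          linear_combination hcσ - hc0
        have e2 : (σ:ℝ) * (u₂:ℝ) = (m₂:ℝ) * (F (-(σ:ℝ)) - F 0) := by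
          linear_combination - hcmσ + hc0
        have hle1 : (σ:ℝ)*(u₂:ℝ) ≤ (m₂:ℝ) := by
          have h7 : (m₂:ℝ) * (F 0 - F (σ:ℝ)) ≤ (m₂:ℝ) * 1 :=
            mul_le_mul_of_nonpos_left (by linarith) hm2r.le
          linarith [e1]
        have hge1 : (m₂:ℝ) ≤ (σ:ℝ)*(u₂:ℝ) := by
          have h7 : (m₂:ℝ) * 1 ≤ (m₂:ℝ) * (F (-(σ:ℝ)) - F 0) :=
            mul_le_mul_of_nonpos_left (by linarith) hm2r.le
          linarith [e2]
        have hequ : (σ:ℝ)*(u₂:ℝ) = (m₂:ℝ) := le_antisymm hle1 hge1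
        have hu2r : (u₂:ℝ) = (σ:ℝ)*(m₂:ℝ) := by
          rw [← hequ]; linear_combination (-(u₂:ℝ)) * hσ2
        have hx1 : x*((σ:ℝ)*(m₂:ℝ)) + (m₂:ℝ)*F x = (m₂:ℝ)*F 0 := by
          rw [← hu2r]; linarith [hc0]
        have hx2 : (σ:ℝ)*x + F x = F 0 := by
          have h9 : (m₂:ℝ)*((σ:ℝ)*x + F x) = (m₂:ℝ)*F 0 := by linear_combination hx1
          exact mul_left_cancel₀ hm2ne h9
        rw [hF0] at hx2; linarith
      · -- m₂ = 0
        exfalso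
        subst hm2
        have hqa := hmax₂ a le_rfl (by linarith)
        have hqb := hmax₂ (b:ℝ) (by linarith) le_rfl
        push_cast at hqa hqb habs₂
        have hu2 : (u₂:ℝ) = 0 := by
          rcases lt_trichotomy (u₂:ℝ) 0 with h | h | h
          · nlinarith [hqa]
          · exact h
          · nlinarith [hqb]
        rw [hu2] at habs₂; simp at habs₂
      · -- m₂ > 0
        have hm2r : (0:ℝ) < (m₂:ℝ) := by exact_mod_cast hm2
        have hl0 := hmax₂ 0 (by linarith) (by linarith)
        have hlσ := hmax₂ (σ:ℝ) (by linarith) (by linarith)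
        have hlmσ := hmax₂ (-(σ:ℝ)) (by linarith) (by linarith)
        have hεpos : 0 < x*(u₂:ℝ) + (m₂:ℝ)*F x := by
          have h0 : 0 < (m₂:ℝ) * F 0 := mul_pos hm2r hf0'
          linarith [hl0]
        have hε1 : x*(u₂:ℝ) + (m₂:ℝ)*F x = 1 := by
          rcases (abs_eq (by norm_num : (0:ℝ) ≤ 1)).1 habs₂ with h | h
          · exact h
          · linarith
        have hm2M : (m₂:ℝ) ≤ (m₀:ℝ) := by
          have h3 : (m₂:ℝ) * (1/(m₀:ℝ)) ≤ 1 := by rw [← hF0]; linarith [hl0]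
          rw [mul_one_div, div_le_one hmr] at h3
          exact h3
        have hlbu : (m₂:ℝ) - 1 < (σ:ℝ)*(u₂:ℝ) := by
          have hp1 := mul_lt_mul_of_pos_left h2' hm2r
          nlinarith [hlmσ, hε1]
        have hubu : (σ:ℝ)*(u₂:ℝ) < (m₂:ℝ) + 1 := by
          have hp1 := mul_lt_mul_of_pos_left h1' hm2r
          nlinarith [hlσ, hε1]
        have hsu2 : σ * u₂ = m₂ := by
          have hu1 : (m₂ - 1 : ℤ) < σ * u₂ := by
            exact_mod_cast (by push_cast; linarith : ((m₂ - 1 : ℤ):ℝ) < ((σ*u₂ : ℤ):ℝ))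
          have hu2 : (σ * u₂ : ℤ) < m₂ + 1 := by
            exact_mod_cast (by push_cast; linarith : ((σ*u₂ : ℤ):ℝ) < ((m₂ + 1 : ℤ):ℝ))
          omega
        have hu2Z : u₂ = σ * m₂ := by rcases hσ with h | h <;> subst h <;> omega
        have hu2r : (u₂:ℝ) = (σ:ℝ)*(m₂:ℝ) := by exact_mod_cast hu2Z
        have hval : (σ:ℝ)*x + F x = 1/(m₂:ℝ) := by
          rw [eq_div_iff (ne_of_gt hm2r)]
          rw [hu2r] at hε1
          linear_combination hε1
        have hGx := G x hax.le hxb.le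
        have h12 : 1/(m₂:ℝ) ≤ 1/(m₀:ℝ) := by rw [← hval]; exact hGx
        have hm02 : (m₀:ℝ) ≤ (m₂:ℝ) := by
          rw [div_le_div_iff₀ hm2r hmr] at h12; linarith
        have hmeq : (m₂:ℝ) = (m₀:ℝ) := le_antisymm hm2M hm02
        rw [← hmeq]; linarith [hval]
    -- Part 3: endpoints via closedness
    have hclosed : IsClosed K := by
      rw [hK]
      exact ((Set.toFinite (latticeEmbed 1 '' (S : Set ((Fin 1 → ℤ) × ℤ)))).isCompact_convexHull ℝ).isClosed
    have hseq : Filter.Tendsto (fun n : ℕ => 1/((n:ℝ)+1)) Filter.atTop (nhds 0) :=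
      tendsto_one_div_add_atTop_nhds_zero_nat
    have hlimmem : ∀ (x0 : ℝ) (xs : ℕ → ℝ), (∀ n, (a:ℝ) < xs n ∧ xs n < b) →
        Filter.Tendsto xs Filter.atTop (nhds x0) →
        ((fun _ => x0 : Fin 1 → ℝ), 1/(m₀:ℝ) - (σ:ℝ)*x0) ∈ K := by
      intro x0 xs hxs htx
      have hmem' : ∀ n : ℕ, ((fun _ => xs n : Fin 1 → ℝ), 1/(m₀:ℝ) - (σ:ℝ)*xs n) ∈ K := by
        intro n
        rw [← hA (xs n) (hxs n).1 (hxs n).2]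
        exact hFmem _ (hxs n).1.le (hxs n).2.le
      have htend : Filter.Tendsto (fun n => ((fun _ => xs n : Fin 1 → ℝ), 1/(m₀:ℝ) - (σ:ℝ)*xs n))
          Filter.atTop (nhds ((fun _ => x0 : Fin 1 → ℝ), 1/(m₀:ℝ) - (σ:ℝ)*x0)) := by
        apply Filter.Tendsto.prodMk_nhds
        · rw [tendsto_pi_nhds]; intro _; exact htx
        · exact tendsto_const_nhds.sub (htx.const_mul (σ:ℝ))
      exact hclosed.mem_of_tendsto htend (Filter.Eventually.of_forall hmem')
    have hFb : F b = 1/(m₀:ℝ) - (σ:ℝ)*b := by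
      have hKb := hlimmem (b:ℝ) (fun n => (b:ℝ) - 1/((n:ℝ)+1)) (by
        intro n
        have h1n : 1/((n:ℝ)+1) ≤ 1 := by
          rw [div_le_one (by positivity)]
          linarith [Nat.cast_nonneg (α := ℝ) n]
        have h0n : 0 < 1/((n:ℝ)+1) := by positivity
        constructor <;> [linarith; linarith])
        (by simpa using (tendsto_const_nhds.sub hseq))
      have hge := hFub (b:ℝ) (by linarith) le_rfl _ hKb
      have hle := G (b:ℝ) (by linarith) le_rfl
      linarith
    have hFa : F a = 1/(m₀:ℝ) - (σ:ℝ)*a := by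
      have hKa := hlimmem (a:ℝ) (fun n => (a:ℝ) + 1/((n:ℝ)+1)) (by
        intro n
        have h1n : 1/((n:ℝ)+1) ≤ 1 := by
          rw [div_le_one (by positivity)]
          linarith [Nat.cast_nonneg (α := ℝ) n]
        have h0n : 0 < 1/((n:ℝ)+1) := by positivity
        constructor <;> [linarith; linarith])
        (by simpa using (tendsto_const_nhds.add hseq))
      have hge := hFub (a:ℝ) le_rfl (by linarith) _ hKa
      have hle := G (a:ℝ) le_rfl (by linarith)
      linarith
    have hall : ∀ y : ℝ, (a:ℝ) ≤ y → y ≤ b → F y = 1/(m₀:ℝ) - (σ:ℝ)*y := by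
      intro y hy1 hy2
      have hd : (0:ℝ) < (b:ℝ) - a := by linarith
      set t := ((b:ℝ) - y)/((b:ℝ) - (a:ℝ)) with hts
      have ht0 : 0 ≤ t := div_nonneg (by linarith) hd.le
      have ht1 : t ≤ 1 := by rw [hts, div_le_one hd]; linarith
      have hyc : t*(a:ℝ) + (1-t)*(b:ℝ) = y := by rw [hts]; field_simp; ring
      have hcc := hconc a b t le_rfl (by linarith) (by linarith) le_rfl ht0 ht1
      rw [hyc, hFa, hFb] at hcc
      have hσy : (σ:ℝ)*(t*(a:ℝ) + (1-t)*(b:ℝ)) = (σ:ℝ)*y := by rw [hyc]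
      have hge : 1/(m₀:ℝ) - (σ:ℝ)*y ≤ F y := by nlinarith [hcc, hσy]
      have hle := G y hy1 hy2
      linarith
    exact hfinish m₀ (by omega) hall


/-- For a translated function of a normalized two-dimensional Fano CDP on `[a,b]`:
if `f(1) > -1` then `f(-1) ≤ 1`, and if `f(-1) > -1` then `f(1) ≤ 1`. -/
theorem value_le_one_of_other_gt_neg_one
    (a b : ℤ) (ha : a ≤ -1) (hb : 1 ≤ b)
    (f : (Fin 1 → ℝ) → ℝ)
    (hicpa : IsICPA 1 (intervalBox a b) f)
    (hht : AtHeightOne 1 (intervalBox a b) f)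
    (hf0 : 0 < f 0)
    (hnl : ¬ IsIntegralAffineOn 1 (intervalBox a b) f) :
    ((-1 : ℝ) < f (fun _ => 1) → f (fun _ => -1) ≤ 1) ∧
    ((-1 : ℝ) < f (fun _ => -1) → f (fun _ => 1) ≤ 1) := by
  constructor
  · intro hgt
    by_contra hc
    push_neg at hc
    refine aux_core_value a b ha hb f hicpa hht hf0 hnl 1 (Or.inl rfl) ?_ ?_
    · simpa using hgt
    · simpa using hc
  · intro hgt
    by_contra hc
    push_neg at hc
    refine aux_core_value a b ha hb f hicpa hht hf0 hnl (-1) (Or.inr rfl) ?_ ?_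
    · simpa using hgt
    · simpa using hc

end
end

section
/- Let a, b ∈ ℤ with a < 0 < b and b − a > 2, and let Box = [a,b] ⊆ ℝ. Let f be an integral concave piecewise-affine function on Box which is at height one and satisfies f(0) = 1. Then f is affine on [a,0] and affine on [0,b]; in particular, the graph of f has at most one interior vertex, which can only lie above 0. -/
open scoped BigOperators

noncomputable section

set_option maxHeartbeats 1600000 in
/-- An integral (`f 0 = 1`) concave piecewise-affine function at height one on an interval
`[a,b]` of length greater than two, with `a < 0 < b`, is affine on `[a,0]` and on `[0,b]`. -/
theorem integral_function_at_most_one_interior_vertex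
    (a b : ℤ) (ha : a < 0) (hb : 0 < b) (hab : 2 < b - a)
    (f : (Fin 1 → ℝ) → ℝ)
    (hicpa : IsICPA 1 (intervalBox a b) f)
    (hht : AtHeightOne 1 (intervalBox a b) f)
    (hf0 : f 0 = 1) :
    (∃ s c : ℝ, ∀ p ∈ intervalBox a b, p 0 ≤ 0 → f p = s * p 0 + c) ∧
    (∃ s c : ℝ, ∀ p ∈ intervalBox a b, 0 ≤ p 0 → f p = s * p 0 + c) := by
  obtain ⟨S, hproj, hgr⟩ := hicpa
  have ha' : (a:ℝ) < 0 := by exact_mod_cast ha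
  have hb' : (0:ℝ) < (b:ℝ) := by exact_mod_cast hb
  have hab' : (a:ℝ) < (b:ℝ) := lt_trans ha' hb'
  have h0 : f (fun _ : Fin 1 => (0:ℝ)) = 1 := hf0
  have hpe : ∀ p : Fin 1 → ℝ, f p = f (fun _ : Fin 1 => p 0) := fun p =>
    congrArg f (funext fun i => congrArg p (Subsingleton.elim i 0))
  -- concavity of f on the box
  have conc : ∀ y z θ : ℝ, (a:ℝ) ≤ y → y ≤ (b:ℝ) → (a:ℝ) ≤ z → z ≤ (b:ℝ) → 0 ≤ θ → θ ≤ 1 →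
      θ * f (fun _ : Fin 1 => y) + (1-θ) * f (fun _ : Fin 1 => z)
        ≤ f (fun _ : Fin 1 => θ*y + (1-θ)*z) := by
    intro y z θ hy1 hy2 hz1 hz2 hθ0 hθ1
    have hY : (((fun _ : Fin 1 => y) : Fin 1 → ℝ), f (fun _ : Fin 1 => y)) ∈
        convexHull ℝ (latticeEmbed 1 '' (S : Set ((Fin 1 → ℤ) × ℤ))) :=
      (hgr (fun _ : Fin 1 => y) ⟨hy1, hy2⟩).1
    have hZ : (((fun _ : Fin 1 => z) : Fin 1 → ℝ), f (fun _ : Fin 1 => z)) ∈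
        convexHull ℝ (latticeEmbed 1 '' (S : Set ((Fin 1 → ℤ) × ℤ))) :=
      (hgr (fun _ : Fin 1 => z) ⟨hz1, hz2⟩).1
    have hcomb := (convex_convexHull ℝ (latticeEmbed 1 '' (S : Set ((Fin 1 → ℤ) × ℤ))))
      hY hZ hθ0 (by linarith : (0:ℝ) ≤ 1 - θ) (by ring)
    have hpair : θ • ((((fun _ : Fin 1 => y) : Fin 1 → ℝ), f (fun _ : Fin 1 => y)) :
          (Fin 1 → ℝ) × ℝ) + (1-θ) • (((fun _ : Fin 1 => z) : Fin 1 → ℝ), f (fun _ : Fin 1 => z))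
        = (((fun _ : Fin 1 => θ*y + (1-θ)*z) : Fin 1 → ℝ),
            θ * f (fun _ : Fin 1 => y) + (1-θ) * f (fun _ : Fin 1 => z)) := by
      refine Prod.ext_iff.mpr ⟨?_, ?_⟩
      · funext i; simp [smul_eq_mul]
      · simp [smul_eq_mul]
    rw [hpair] at hcomb
    have hWbox : ((fun _ : Fin 1 => θ*y + (1-θ)*z) : Fin 1 → ℝ) ∈ intervalBox a b := by
      refine ⟨?_, ?_⟩
      · have h1 : 0 ≤ θ * (y - a) := mul_nonneg hθ0 (by linarith)
        have h2 : 0 ≤ (1-θ) * (z - a) := mul_nonneg (by linarith) (by linarith)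
        show (a:ℝ) ≤ θ*y + (1-θ)*z
        nlinarith
      · have h1 : 0 ≤ θ * ((b:ℝ) - y) := mul_nonneg hθ0 (by linarith)
        have h2 : 0 ≤ (1-θ) * ((b:ℝ) - z) := mul_nonneg (by linarith) (by linarith)
        show θ*y + (1-θ)*z ≤ (b:ℝ)
        nlinarith
    exact (hgr _ hWbox).2 hcomb
  -- the pointwise dichotomy coming from the height-one condition
  have claim : ∀ x : ℝ, (a:ℝ) < x → x < (b:ℝ) →
      (∃ s c : ℝ, ∀ p ∈ intervalBox a b, f p = s * p 0 + c) ∨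
      (∃ u : ℝ, (∀ p ∈ intervalBox a b, f p ≤ 1 - u * p 0) ∧
        f (fun _ : Fin 1 => x) = 1 - u * x) := by
    intro x hax hxb
    obtain ⟨u, m, habs, hmax⟩ := hht (fun _ : Fin 1 => x) ⟨hax.le, hxb.le⟩
    simp only [dotZ, Fin.sum_univ_one] at habs hmax
    set U : ℝ := ((u 0 : ℤ) : ℝ) with hU
    set M : ℝ := ((m : ℤ) : ℝ) with hM
    have hmax' : ∀ t : ℝ, (a:ℝ) ≤ t → t ≤ (b:ℝ) →
        t * U + M * f (fun _ : Fin 1 => t) ≤ x * U + M * f (fun _ : Fin 1 => x) := by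
      intro t ht1 ht2
      exact hmax (fun _ : Fin 1 => t) ⟨ht1, ht2⟩
    rcases lt_trichotomy m 0 with hm | hm | hm
    · -- m < 0 : f is globally affine
      have hMneg : M < 0 := by rw [hM]; exact_mod_cast hm
      left
      have hgeq : ∀ t : ℝ, (a:ℝ) ≤ t → t ≤ (b:ℝ) →
          t * U + M * f (fun _ : Fin 1 => t) = x * U + M * f (fun _ : Fin 1 => x) := by
        intro t ht1 ht2
        refine le_antisymm (hmax' t ht1 ht2) ?_
        rcases le_or_gt t x with hc | hc
        · set μ : ℝ := ((b:ℝ) - x)/((b:ℝ) - t) with hμd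
          have htb : t < (b:ℝ) := lt_of_le_of_lt hc hxb
          have hμpos : 0 < μ := div_pos (by linarith) (by linarith)
          have hμ1 : μ ≤ 1 := by rw [hμd, div_le_one (by linarith)]; linarith
          have hbt : (b:ℝ) - t ≠ 0 := ne_of_gt (by linarith)
          have harg : μ * t + (1-μ) * (b:ℝ) = x := by
            rw [hμd]; field_simp; ring
          have hfun : ((fun _ : Fin 1 => μ*t + (1-μ)*(b:ℝ)) : Fin 1 → ℝ)
              = (fun _ : Fin 1 => x) := by rw [harg]
          have hcc := conc t (b:ℝ) μ ht1 ht2 hab'.le le_rfl hμpos.le hμ1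
          rw [hfun] at hcc
          have h2 : M * f (fun _ : Fin 1 => x) ≤
              M * (μ * f (fun _ : Fin 1 => t) + (1-μ) * f (fun _ : Fin 1 => (b:ℝ))) :=
            mul_le_mul_of_nonpos_left hcc hMneg.le
          have h4 := hmax' (b:ℝ) hab'.le le_rfl
          have h5 : (1-μ) * ((b:ℝ) * U + M * f (fun _ : Fin 1 => (b:ℝ))) ≤
              (1-μ) * (x * U + M * f (fun _ : Fin 1 => x)) :=
            mul_le_mul_of_nonneg_left h4 (by linarith)
          have hargU : x * U = (μ * t + (1-μ) * (b:ℝ)) * U := by rw [harg]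
          have h6 : μ * (x * U + M * f (fun _ : Fin 1 => x)) ≤
              μ * (t * U + M * f (fun _ : Fin 1 => t)) := by nlinarith [h2, h5, hargU]
          exact le_of_mul_le_mul_left h6 hμpos
        · set μ : ℝ := (x - (a:ℝ))/(t - (a:ℝ)) with hμd
          have hta : (a:ℝ) < t := lt_trans hax hc
          have hμpos : 0 < μ := div_pos (by linarith) (by linarith)
          have hμ1 : μ ≤ 1 := by rw [hμd, div_le_one (by linarith)]; linarith
          have hat : t - (a:ℝ) ≠ 0 := ne_of_gt (by linarith)
          have harg : μ * t + (1-μ) * (a:ℝ) = x := by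
            rw [hμd]; field_simp; ring
          have hfun : ((fun _ : Fin 1 => μ*t + (1-μ)*(a:ℝ)) : Fin 1 → ℝ)
              = (fun _ : Fin 1 => x) := by rw [harg]
          have hcc := conc t (a:ℝ) μ ht1 ht2 le_rfl hab'.le hμpos.le hμ1
          rw [hfun] at hcc
          have h2 : M * f (fun _ : Fin 1 => x) ≤
              M * (μ * f (fun _ : Fin 1 => t) + (1-μ) * f (fun _ : Fin 1 => (a:ℝ))) :=
            mul_le_mul_of_nonpos_left hcc hMneg.le
          have h4 := hmax' (a:ℝ) le_rfl hab'.le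
          have h5 : (1-μ) * ((a:ℝ) * U + M * f (fun _ : Fin 1 => (a:ℝ))) ≤
              (1-μ) * (x * U + M * f (fun _ : Fin 1 => x)) :=
            mul_le_mul_of_nonneg_left h4 (by linarith)
          have hargU : x * U = (μ * t + (1-μ) * (a:ℝ)) * U := by rw [harg]
          have h6 : μ * (x * U + M * f (fun _ : Fin 1 => x)) ≤
              μ * (t * U + M * f (fun _ : Fin 1 => t)) := by nlinarith [h2, h5, hargU]
          exact le_of_mul_le_mul_left h6 hμpos
      have hMne : M ≠ 0 := ne_of_lt hMneg
      refine ⟨-(U/M), (x * U + M * f (fun _ : Fin 1 => x))/M, ?_⟩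
      intro p hp
      have hp' : (a:ℝ) ≤ p 0 ∧ p 0 ≤ (b:ℝ) := hp
      have hg := hgeq (p 0) hp'.1 hp'.2
      rw [hpe p]
      rw [show -(U/M) * p 0 + (x * U + M * f (fun _ : Fin 1 => x))/M
          = (x * U + M * f (fun _ : Fin 1 => x) - p 0 * U)/M by field_simp; ring]
      rw [eq_div_iff hMne]
      nlinarith [hg]
    · -- m = 0 : impossible
      exfalso
      have hM0 : M = 0 := by rw [hM, hm]; norm_num
      have hA := hmax' (a:ℝ) le_rfl hab'.le
      have hB := hmax' (b:ℝ) hab'.le le_rfl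
      rw [hM0] at hA hB habs
      simp only [zero_mul, add_zero] at hA hB habs
      have hU0 : U = 0 := by
        rcases lt_trichotomy U 0 with h | h | h
        · exfalso; nlinarith [mul_pos (neg_pos.mpr h) (sub_pos.mpr hax)]
        · exact h
        · exfalso; nlinarith [mul_pos h (sub_pos.mpr hxb)]
      rw [hU0] at habs
      simp at habs
    · -- m > 0 : supporting line through (0,1)
      right
      have hm1 : (1:ℤ) ≤ m := hm
      have hM1 : (1:ℝ) ≤ M := by rw [hM]; exact_mod_cast hm1
      have hp0 := hmax' 0 ha'.le hb'.le
      rw [h0] at hp0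
      rcases (abs_eq (by norm_num : (0:ℝ) ≤ 1)).mp habs with hσ | hσ
      · have hMle : M ≤ 1 := by nlinarith [hp0]
        have hMeq : M = 1 := le_antisymm hMle hM1
        rw [hMeq] at hσ
        refine ⟨U, ?_, by linarith⟩
        intro p hp
        have h := hmax p hp
        rw [hMeq] at h
        linarith
      · exfalso; nlinarith [hp0, hM1]
  -- assemble
  by_cases hGA : ∃ s c : ℝ, ∀ p ∈ intervalBox a b, f p = s * p 0 + c
  · obtain ⟨s, c, hsc⟩ := hGA
    exact ⟨⟨s, c, fun p hp _ => hsc p hp⟩, ⟨s, c, fun p hp _ => hsc p hp⟩⟩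
  have loc : ∀ x : ℝ, (a:ℝ) < x → x < (b:ℝ) → ∃ u : ℝ,
      (∀ p ∈ intervalBox a b, f p ≤ 1 - u * p 0) ∧
      f (fun _ : Fin 1 => x) = 1 - u * x :=
    fun x h1 h2 => (claim x h1 h2).resolve_left hGA
  -- between 0 and a touching point, f coincides with the touching line
  have segGen : ∀ u x0 c : ℝ, (a:ℝ) ≤ x0 → x0 ≤ (b:ℝ) → 0 ≤ c → c ≤ 1 →
      (∀ p ∈ intervalBox a b, f p ≤ 1 - u * p 0) →
      f (fun _ : Fin 1 => x0) = 1 - u * x0 →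
      f (fun _ : Fin 1 => c * x0) = 1 - u * (c * x0) := by
    intro u x0 c hx1 hx2 hc0 hc1 hub ht
    have hm1 : (a:ℝ) ≤ c * x0 := by
      nlinarith [mul_nonneg hc0 (sub_nonneg.mpr hx1),
        mul_nonneg (sub_nonneg.mpr hc1) (neg_nonneg.mpr ha'.le)]
    have hm2 : c * x0 ≤ (b:ℝ) := by
      nlinarith [mul_nonneg hc0 (sub_nonneg.mpr hx2),
        mul_nonneg (sub_nonneg.mpr hc1) hb'.le]
    have hcc := conc x0 0 c hx1 hx2 ha'.le hb'.le hc0 hc1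
    have hfun : ((fun _ : Fin 1 => c*x0 + (1-c)*(0:ℝ)) : Fin 1 → ℝ)
        = (fun _ : Fin 1 => c * x0) := by norm_num
    rw [hfun, ht, h0] at hcc
    have hup : f (fun _ : Fin 1 => c * x0) ≤ 1 - u * (c * x0) :=
      hub (fun _ : Fin 1 => c * x0) ⟨hm1, hm2⟩
    nlinarith [hcc, hup]
  -- endpoint values via a limit argument
  have endPt : ∀ (u e : ℝ) (w : ℕ → ℝ), (a:ℝ) ≤ e → e ≤ (b:ℝ) →
      (∀ n, (a:ℝ) ≤ w n ∧ w n ≤ (b:ℝ) ∧ f (fun _ : Fin 1 => w n) = 1 - u * w n) →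
      Filter.Tendsto w Filter.atTop (nhds e) →
      (∀ p ∈ intervalBox a b, f p ≤ 1 - u * p 0) →
      f (fun _ : Fin 1 => e) = 1 - u * e := by
    intro u e w he1 he2 hw hwt hub
    have hfin : (latticeEmbed 1 '' (S : Set ((Fin 1 → ℤ) × ℤ))).Finite :=
      S.finite_toSet.image _
    have hcl : IsClosed (convexHull ℝ (latticeEmbed 1 '' (S : Set ((Fin 1 → ℤ) × ℤ)))) :=
      (hfin.isCompact_convexHull (𝕜 := ℝ)).isClosed
    have hmemK : ∀ n, (((fun _ : Fin 1 => w n) : Fin 1 → ℝ), 1 - u * w n) ∈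
        convexHull ℝ (latticeEmbed 1 '' (S : Set ((Fin 1 → ℤ) × ℤ))) := by
      intro n
      have h : (((fun _ : Fin 1 => w n) : Fin 1 → ℝ), f (fun _ : Fin 1 => w n)) ∈
          convexHull ℝ (latticeEmbed 1 '' (S : Set ((Fin 1 → ℤ) × ℤ))) :=
        (hgr (fun _ : Fin 1 => w n) ⟨(hw n).1, (hw n).2.1⟩).1
      rw [(hw n).2.2] at h
      exact h
    have ht1 : Filter.Tendsto (fun n => ((fun _ : Fin 1 => w n) : Fin 1 → ℝ))
        Filter.atTop (nhds ((fun _ : Fin 1 => e) : Fin 1 → ℝ)) := by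
      rw [tendsto_pi_nhds]; intro i; exact hwt
    have ht2 : Filter.Tendsto (fun n => 1 - u * w n) Filter.atTop (nhds (1 - u * e)) :=
      tendsto_const_nhds.sub (hwt.const_mul u)
    have hmem := hcl.mem_of_tendsto (ht1.prodMk_nhds ht2)
      (Filter.Eventually.of_forall hmemK)
    have hge : 1 - u * e ≤ f (fun _ : Fin 1 => e) := (hgr _ ⟨he1, he2⟩).2 hmem
    have hle : f (fun _ : Fin 1 => e) ≤ 1 - u * e :=
      hub (fun _ : Fin 1 => e) ⟨he1, he2⟩
    linarith
  have auxT : ∀ c : ℝ, Filter.Tendsto (fun n : ℕ => c - c/((n:ℝ)+2))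
      Filter.atTop (nhds c) := by
    intro c
    have h1 : Filter.Tendsto (fun n : ℕ => ((n:ℝ)+2)) Filter.atTop Filter.atTop :=
      Filter.tendsto_atTop_add_const_right _ 2 tendsto_natCast_atTop_atTop
    have h2 : Filter.Tendsto (fun n : ℕ => c/((n:ℝ)+2)) Filter.atTop (nhds 0) :=
      Filter.Tendsto.div_atTop tendsto_const_nhds h1
    simpa using tendsto_const_nhds.sub h2
  -- the side [0, b]
  have hx0a : (a:ℝ) < (b:ℝ)/2 := by linarith
  have hx0b : (b:ℝ)/2 < (b:ℝ) := by linarith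
  obtain ⟨u1, hub1, ht1⟩ := loc ((b:ℝ)/2) hx0a hx0b
  have rightFormula : ∀ y : ℝ, 0 ≤ y → y < (b:ℝ) → f (fun _ : Fin 1 => y) = 1 - u1 * y := by
    intro y hy0 hyb
    rcases le_or_gt y ((b:ℝ)/2) with hyx | hyx
    · have hc0 : 0 ≤ y/((b:ℝ)/2) := div_nonneg hy0 (by linarith)
      have hc1 : y/((b:ℝ)/2) ≤ 1 := by rw [div_le_one (by linarith)]; linarith
      have hcx : y/((b:ℝ)/2) * ((b:ℝ)/2) = y := by field_simp [hb'.ne']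
      have hres := segGen u1 ((b:ℝ)/2) (y/((b:ℝ)/2)) hx0a.le hx0b.le hc0 hc1 hub1 ht1
      rw [hcx] at hres
      exact hres
    · obtain ⟨u2, hub2, ht2⟩ := loc y (by linarith) hyb
      have hy0' : 0 < y := by linarith
      have hc0 : 0 ≤ ((b:ℝ)/2)/y := div_nonneg (by linarith) hy0
      have hc1 : ((b:ℝ)/2)/y ≤ 1 := by rw [div_le_one hy0']; linarith
      have hcx : ((b:ℝ)/2)/y * y = (b:ℝ)/2 := by field_simp [hy0'.ne']
      have hres := segGen u2 y (((b:ℝ)/2)/y) (by linarith) hyb.le hc0 hc1 hub2 ht2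
      rw [hcx] at hres
      have h2 : u1 * ((b:ℝ)/2) = u2 * ((b:ℝ)/2) := by linarith [hres, ht1]
      have hu : u2 = u1 :=
        (mul_right_cancel₀ (ne_of_gt (by linarith : (0:ℝ) < (b:ℝ)/2)) h2).symm
      rw [ht2, hu]
  have endB : f (fun _ : Fin 1 => (b:ℝ)) = 1 - u1 * (b:ℝ) := by
    refine endPt u1 (b:ℝ) (fun n : ℕ => (b:ℝ) - (b:ℝ)/((n:ℝ)+2)) hab'.le le_rfl ?_ (auxT _) hub1
    intro n
    have h2n : (0:ℝ) < (n:ℝ)+2 := by positivity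
    have hn0 : (0:ℝ) ≤ (n:ℝ) := Nat.cast_nonneg n
    have hpos : 0 < (b:ℝ)/((n:ℝ)+2) := div_pos hb' h2n
    have hle2 : (b:ℝ)/((n:ℝ)+2) ≤ (b:ℝ)/2 := by
      apply div_le_div_of_nonneg_left hb'.le (by norm_num) (by linarith)
    refine ⟨by linarith, by linarith, ?_⟩
    exact rightFormula _ (by linarith) (by linarith)
  have allRight : ∀ y : ℝ, 0 ≤ y → y ≤ (b:ℝ) → f (fun _ : Fin 1 => y) = 1 - u1 * y := by
    intro y h1 h2
    rcases lt_or_eq_of_le h2 with h | h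
    · exact rightFormula y h1 h
    · rw [h]; exact endB
  -- the side [a, 0]
  obtain ⟨u3, hub3, ht3⟩ := loc ((a:ℝ)/2) (by linarith) (by linarith)
  have leftFormula : ∀ y : ℝ, (a:ℝ) < y → y ≤ 0 → f (fun _ : Fin 1 => y) = 1 - u3 * y := by
    intro y hya hy0
    have hane : (a:ℝ)/2 < 0 := by linarith
    rcases le_or_gt ((a:ℝ)/2) y with hxy | hxy
    · have hc0 : 0 ≤ y/((a:ℝ)/2) := by
        rw [div_nonneg_iff]; right; exact ⟨hy0, hane.le⟩
      have hc1 : y/((a:ℝ)/2) ≤ 1 := by rw [div_le_iff_of_neg hane]; linarith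
      have hcx : y/((a:ℝ)/2) * ((a:ℝ)/2) = y := by
        field_simp [ha'.ne]
      have hres := segGen u3 ((a:ℝ)/2) (y/((a:ℝ)/2)) (by linarith) (by linarith) hc0 hc1 hub3 ht3
      rw [hcx] at hres
      exact hres
    · obtain ⟨u4, hub4, ht4⟩ := loc y hya (by linarith)
      have hyn : y < 0 := lt_trans hxy hane
      have hc0 : 0 ≤ ((a:ℝ)/2)/y := by
        rw [div_nonneg_iff]; right; exact ⟨hane.le, hyn.le⟩
      have hc1 : ((a:ℝ)/2)/y ≤ 1 := by rw [div_le_iff_of_neg hyn]; linarith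
      have hcx : ((a:ℝ)/2)/y * y = (a:ℝ)/2 := by field_simp [hyn.ne]
      have hres := segGen u4 y (((a:ℝ)/2)/y) hya.le (by linarith) hc0 hc1 hub4 ht4
      rw [hcx] at hres
      have h2 : u3 * ((a:ℝ)/2) = u4 * ((a:ℝ)/2) := by linarith [hres, ht3]
      have hu : u4 = u3 :=
        (mul_right_cancel₀ (ne_of_lt (by linarith : (a:ℝ)/2 < 0)) h2).symm
      rw [ht4, hu]
  have endA : f (fun _ : Fin 1 => (a:ℝ)) = 1 - u3 * (a:ℝ) := by
    refine endPt u3 (a:ℝ) (fun n : ℕ => (a:ℝ) - (a:ℝ)/((n:ℝ)+2)) le_rfl hab'.le ?_ (auxT _) hub3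
    intro n
    have h2n : (0:ℝ) < (n:ℝ)+2 := by positivity
    have hn0 : (0:ℝ) ≤ (n:ℝ) := Nat.cast_nonneg n
    have hq : (a:ℝ)/((n:ℝ)+2) < 0 := div_neg_of_neg_of_pos ha' h2n
    have h7 : (a:ℝ) ≤ (a:ℝ)/((n:ℝ)+2) := by
      rw [le_div_iff₀ h2n]
      nlinarith [mul_nonneg hn0 (neg_nonneg.mpr ha'.le)]
    refine ⟨by linarith, by linarith, ?_⟩
    exact leftFormula _ (by linarith) (by linarith)
  have allLeft : ∀ y : ℝ, (a:ℝ) ≤ y → y ≤ 0 → f (fun _ : Fin 1 => y) = 1 - u3 * y := by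
    intro y h1 h2
    rcases eq_or_lt_of_le h1 with h | h
    · rw [← h]; exact endA
    · exact leftFormula y h h2
  constructor
  · refine ⟨-u3, 1, ?_⟩
    intro p hp hle
    have hp' : (a:ℝ) ≤ p 0 ∧ p 0 ≤ (b:ℝ) := hp
    rw [hpe p, allLeft (p 0) hp'.1 hle]
    ring
  · refine ⟨-u1, 1, ?_⟩
    intro p hp hge
    have hp' : (a:ℝ) ≤ p 0 ∧ p 0 ≤ (b:ℝ) := hp
    rw [hpe p, allRight (p 0) hge hp'.2]
    ring

end
end

section
/- Let m > 2 be an integer and let Box = [−1, m−1] ⊆ ℝ. Let f be an integral concave piecewise-affine function on Box which is at height one and satisfies f(−1) = 0 and 0 < f(0) < 1 (i.e., f is non-integral). Then, up to shearing, f has one of two forms: there exist β ∈ ℤ and an integer λ ≥ 2 such that, setting g(x) = f(x) − β·(x+1), either (1) λ < m and g(x) = min{(x+1)/λ, 1} for all x ∈ [−1, m−1] (so g has a single vertex at x = λ − 1), or (2) λ divides m and g(x) = (x+1)/λ for all x ∈ [−1, m−1] (so g is a line). -/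
open scoped BigOperators

noncomputable section

private lemma fin1_pt (p : Fin 1 → ℝ) : p = fun _ => p 0 := by
  funext i
  have : Subsingleton (Fin 1) := Fin.subsingleton_one
  rw [Subsingleton.elim i 0]

set_option maxHeartbeats 1000000

/-- A non-integral function of a normalized Fano CDP on `[-1, m-1]` with `f(-1) = 0` has,
up to shearing, one of two explicit forms. -/
theorem nonintegral_function_normal_form
    (m : ℤ) (hm : 2 < m)
    (f : (Fin 1 → ℝ) → ℝ)
    (hicpa : IsICPA 1 (intervalBox (-1) (m - 1)) f)
    (hht : AtHeightOne 1 (intervalBox (-1) (m - 1)) f)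
    (hfm : f (fun _ => -1) = 0)
    (h1 : 0 < f 0) (h2 : f 0 < 1) :
    ∃ (β lam : ℤ), 2 ≤ lam ∧
      ((lam < m ∧ ∀ p ∈ intervalBox (-1) (m - 1),
          f p - (β : ℝ) * (p 0 + 1) = min ((p 0 + 1) / (lam : ℝ)) 1) ∨
       (lam ∣ m ∧ ∀ p ∈ intervalBox (-1) (m - 1),
          f p - (β : ℝ) * (p 0 + 1) = (p 0 + 1) / (lam : ℝ))) := by
  classical
  obtain ⟨S, hproj, hmax⟩ := hicpa
  set C : Set ((Fin 1 → ℝ) × ℝ) :=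
    convexHull ℝ (latticeEmbed 1 '' (S : Set ((Fin 1 → ℤ) × ℤ))) with hCdef
  have hm2 : (2:ℝ) < (m:ℝ) := by exact_mod_cast hm
  set φ : ℝ → ℝ := fun t => f (fun _ => t) with hphi
  have hφm : φ (-1) = 0 := hfm
  have hφ0pos : 0 < φ 0 := by
    have : φ 0 = f 0 := rfl
    rw [this]; exact h1
  have hφ0lt : φ 0 < 1 := by
    have : φ 0 = f 0 := rfl
    rw [this]; exact h2
  have hboxmem : ∀ t : ℝ, (fun _ => t : Fin 1 → ℝ) ∈ intervalBox (-1) (m-1) ↔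
      (-1 ≤ t ∧ t ≤ (m:ℝ)-1) := by
    intro t
    simp only [intervalBox, Set.mem_setOf_eq]
    push_cast
    tauto
  have hgreat : ∀ t:ℝ, -1 ≤ t → t ≤ (m:ℝ)-1 →
      IsGreatest {s : ℝ | ((fun _ => t : Fin 1 → ℝ), s) ∈ C} (φ t) := by
    intro t h1' h2'
    exact hmax _ ((hboxmem t).2 ⟨h1', h2'⟩)
  have hpt : ∀ t:ℝ, -1 ≤ t → t ≤ (m:ℝ)-1 → ((fun _ => t : Fin 1 → ℝ), φ t) ∈ C :=
    fun t h1' h2' => (hgreat t h1' h2').1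
  have hub : ∀ t:ℝ, -1 ≤ t → t ≤ (m:ℝ)-1 → ∀ s, ((fun _ => t : Fin 1 → ℝ), s) ∈ C → s ≤ φ t :=
    fun t h1' h2' s hs => (hgreat t h1' h2').2 hs
  have hfstC : ∀ z ∈ C, -1 ≤ z.1 0 ∧ z.1 0 ≤ (m:ℝ)-1 := by
    intro z hz
    have hz1 : z.1 ∈ Prod.fst '' C := ⟨z, hz, rfl⟩
    rw [hproj] at hz1
    obtain ⟨ha, hb⟩ := hz1
    constructor
    · exact_mod_cast ha
    · push_cast at hb ⊢; exact hb
  have hlatmem : latticeEmbed 1 '' (S : Set ((Fin 1 → ℤ) × ℤ)) ⊆ C := subset_convexHull ℝ _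
  have hzlat : ∀ z ∈ latticeEmbed 1 '' (S : Set ((Fin 1 → ℤ) × ℤ)),
      (∃ k1 k2 : ℤ, z.1 0 = (k1:ℝ) ∧ z.2 = (k2:ℝ)) ∧ z.1 = (fun _ => z.1 0) ∧
        z.2 ≤ φ (z.1 0) ∧ (-1 ≤ z.1 0 ∧ z.1 0 ≤ (m:ℝ)-1) := by
    rintro z hz
    obtain ⟨p, hpS, rfl⟩ := hz
    have hbounds := hfstC _ (hlatmem ⟨p, hpS, rfl⟩)
    refine ⟨⟨p.1 0, p.2, rfl, rfl⟩, ?_, ?_, hbounds⟩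
    · funext i
      have : Subsingleton (Fin 1) := Fin.subsingleton_one
      rw [Subsingleton.elim i 0]
    · have hmem : ((fun _ => ((p.1 0 : ℤ):ℝ) : Fin 1 → ℝ), ((p.2:ℤ):ℝ)) ∈ C := by
        have heq : (latticeEmbed 1 p) = ((fun _ => ((p.1 0 : ℤ):ℝ) : Fin 1 → ℝ), ((p.2:ℤ):ℝ)) := by
          apply Prod.ext
          · funext i
            have : Subsingleton (Fin 1) := Fin.subsingleton_one
            rw [Subsingleton.elim i 0]; rfl
          · rfl
        rw [← heq]
        exact hlatmem ⟨p, hpS, rfl⟩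
      exact hub _ hbounds.1 hbounds.2 _ hmem
  -- representation of points of C as positive convex combinations of lattice points
  have hrep : ∀ x : (Fin 1 → ℝ) × ℝ, x ∈ C →
      ∃ (T : Finset ((Fin 1 → ℝ) × ℝ)) (w : ((Fin 1 → ℝ) × ℝ) → ℝ),
      ((T:Set ((Fin 1 → ℝ) × ℝ)) ⊆ latticeEmbed 1 '' (S : Set ((Fin 1 → ℤ) × ℤ))) ∧
      T.Nonempty ∧ (∀ z ∈ T, 0 < w z) ∧ (∑ z ∈ T, w z = 1) ∧
      (∑ z ∈ T, w z * z.1 0 = x.1 0) ∧ (∑ z ∈ T, w z * z.2 = x.2) := by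
    intro x hx
    have hTset : latticeEmbed 1 '' (S : Set ((Fin 1 → ℤ) × ℤ))
        = ↑(S.image (latticeEmbed 1)) := (Finset.coe_image).symm
    rw [hCdef, hTset, Finset.convexHull_eq] at hx
    obtain ⟨w, hw0, hw1, hwc⟩ := hx
    rw [Finset.centerMass_eq_of_sum_1 _ id hw1] at hwc
    set T0 := S.image (latticeEmbed 1) with hT0
    set T := T0.filter (fun z => w z ≠ 0) with hT
    have hsub : ∀ (g : ((Fin 1 → ℝ) × ℝ) → ℝ), (∀ z, w z = 0 → g z = 0) →
        ∑ z ∈ T, g z = ∑ z ∈ T0, g z := by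
      intro g hg
      rw [hT]
      apply Finset.sum_filter_of_ne
      intro z _ hgz hwz
      exact hgz (hg z hwz)
    have hw1' : ∑ z ∈ T, w z = 1 := by
      rw [hsub w (fun z h => h)]; exact hw1
    have hfst : ∑ z ∈ T, w z * z.1 0 = x.1 0 := by
      rw [hsub _ (fun z h => by rw [h, zero_mul])]
      have := congrArg (fun v : (Fin 1 → ℝ) × ℝ => v.1 0) hwc
      simpa [Prod.fst_sum, Finset.sum_apply, smul_eq_mul] using this
    have hsnd : ∑ z ∈ T, w z * z.2 = x.2 := by
      rw [hsub _ (fun z h => by rw [h, zero_mul])]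
      have := congrArg (fun v : (Fin 1 → ℝ) × ℝ => v.2) hwc
      simpa [Prod.snd_sum, smul_eq_mul] using this
    refine ⟨T, w, ?_, ?_, ?_, hw1', hfst, hsnd⟩
    · intro z hz
      rw [hTset]
      exact Finset.mem_of_mem_filter z (by exact_mod_cast hz)
    · apply Finset.nonempty_of_ne_empty
      intro hemp
      rw [hemp, Finset.sum_empty] at hw1'
      norm_num at hw1'
    · intro z hz
      rw [hT, Finset.mem_filter] at hz
      exact lt_of_le_of_ne (hw0 z hz.1) (Ne.symm hz.2)
  -- concavity
  have hconc : ∀ x z y : ℝ, -1 ≤ x → x ≤ z → z ≤ y → y ≤ (m:ℝ)-1 → x < y →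
      (y - z) * φ x + (z - x) * φ y ≤ (y - x) * φ z := by
    intro x z y hx hxz hzy hy hxy
    have hyx : 0 < y - x := by linarith
    set a : ℝ := (y - z)/(y - x) with ha
    set b : ℝ := (z - x)/(y - x) with hb
    have ha0 : 0 ≤ a := div_nonneg (by linarith) hyx.le
    have hb0 : 0 ≤ b := div_nonneg (by linarith) hyx.le
    have hab : a + b = 1 := by rw [ha, hb]; field_simp; ring
    have hcx : ((fun _ => x : Fin 1 → ℝ), φ x) ∈ C := hpt x hx (by linarith)
    have hcy : ((fun _ => y : Fin 1 → ℝ), φ y) ∈ C := hpt y (by linarith) hy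
    have hCconv : Convex ℝ C := by rw [hCdef]; exact convex_convexHull ℝ _
    have hcomb := hCconv hcx hcy ha0 hb0 hab
    have heq : a • ((fun _ => x : Fin 1 → ℝ), φ x) + b • ((fun _ => y : Fin 1 → ℝ), φ y)
        = ((fun _ => z : Fin 1 → ℝ), a * φ x + b * φ y) := by
      apply Prod.ext
      · funext i
        show a * x + b * y = z
        rw [ha, hb]; field_simp; ring
      · rfl
    rw [heq] at hcomb
    have hle := hub z (by linarith) (by linarith) _ hcomb
    have haa : a * (y - x) = y - z := by rw [ha]; field_simp
    have hbb : b * (y - x) = z - x := by rw [hb]; field_simp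
    have h2' : (a * φ x + b * φ y) * (y - x) ≤ φ z * (y - x) :=
      mul_le_mul_of_nonneg_right hle hyx.le
    have h3' : (y - z) * φ x + (z - x) * φ y = (a * φ x + b * φ y) * (y - x) := by
      rw [← haa, ← hbb]; ring
    linarith [h3' ▸ h2']
  -- closedness and limit lemma
  have hCclosed : IsClosed C := by
    rw [hCdef]
    exact (Set.Finite.image _ S.finite_toSet).isClosed_convexHull (𝕜 := ℝ)
  have hlim : ∀ A B x₀ : ℝ, -1 ≤ x₀ → x₀ < (m:ℝ)-1 →
      (∀ y, x₀ ≤ y → y < (m:ℝ)-1 → φ y = A*y + B) → A*((m:ℝ)-1) + B ≤ φ ((m:ℝ)-1) := by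
    intro A B x₀ hx₀ hx₀' heq
    have hcont : Continuous (fun y : ℝ => ((fun _ => y : Fin 1 → ℝ), A*y+B)) := by
      apply Continuous.prodMk
      · exact continuous_pi (fun i => continuous_id)
      · exact (continuous_const.mul continuous_id).add continuous_const
    haveI : (nhdsWithin ((m:ℝ)-1) (Set.Iio ((m:ℝ)-1))).NeBot := nhdsLT_neBot _
    have htend : Filter.Tendsto (fun y : ℝ => ((fun _ => y : Fin 1 → ℝ), A*y+B))
        (nhdsWithin ((m:ℝ)-1) (Set.Iio ((m:ℝ)-1)))
        (nhds ((fun _ => (m:ℝ)-1 : Fin 1 → ℝ), A*((m:ℝ)-1)+B)) :=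
      (hcont.tendsto _).mono_left nhdsWithin_le_nhds
    have hev : ∀ᶠ y in nhdsWithin ((m:ℝ)-1) (Set.Iio ((m:ℝ)-1)),
        ((fun _ => y : Fin 1 → ℝ), A*y+B) ∈ C := by
      filter_upwards [Ioo_mem_nhdsLT hx₀'] with y hy
      rw [← heq y hy.1.le hy.2]
      exact hpt y (by linarith [hy.1]) hy.2.le
    have hmem := hCclosed.mem_of_tendsto htend hev
    exact hub _ (by linarith) le_rfl _ hmem
  -- integrality of the right endpoint value
  have hint : ∃ c : ℤ, φ ((m:ℝ)-1) = (c:ℝ) := by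
    obtain ⟨T, w, hTsub, hTne, hw, hw1, hx1, hx2⟩ :=
      hrep ((fun _ => (m:ℝ)-1 : Fin 1 → ℝ), φ ((m:ℝ)-1)) (hpt _ (by linarith) le_rfl)
    have hx1' : ∑ z ∈ T, w z * z.1 0 = (m:ℝ)-1 := hx1
    have hx2' : ∑ z ∈ T, w z * z.2 = φ ((m:ℝ)-1) := hx2
    have hzero1 : ∑ z ∈ T, w z * (((m:ℝ)-1) - z.1 0) = 0 := by
      have hexp : ∑ z ∈ T, w z * (((m:ℝ)-1) - z.1 0)
          = (∑ z ∈ T, w z) * ((m:ℝ)-1) - ∑ z ∈ T, w z * z.1 0 := by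
        rw [Finset.sum_mul, ← Finset.sum_sub_distrib]
        apply Finset.sum_congr rfl; intro z _; ring
      rw [hexp, hw1, hx1', one_mul, sub_self]
    have hnn1 : ∀ z ∈ T, 0 ≤ w z * (((m:ℝ)-1) - z.1 0) := by
      intro z hz
      exact mul_nonneg (hw z hz).le (by linarith [((hzlat z (hTsub hz)).2.2.2).2])
    have hco : ∀ z ∈ T, z.1 0 = (m:ℝ)-1 := by
      intro z hz
      have hall := (Finset.sum_eq_zero_iff_of_nonneg hnn1).1 hzero1 z hz
      rcases mul_eq_zero.1 hall with h|h
      · exact absurd h (ne_of_gt (hw z hz))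
      · linarith
    have hsndle : ∀ z ∈ T, z.2 ≤ φ ((m:ℝ)-1) := by
      intro z hz
      have h := (hzlat z (hTsub hz)).2.2.1
      rwa [hco z hz] at h
    have hzero2 : ∑ z ∈ T, w z * (φ ((m:ℝ)-1) - z.2) = 0 := by
      have hexp : ∑ z ∈ T, w z * (φ ((m:ℝ)-1) - z.2)
          = (∑ z ∈ T, w z) * φ ((m:ℝ)-1) - ∑ z ∈ T, w z * z.2 := by
        rw [Finset.sum_mul, ← Finset.sum_sub_distrib]
        apply Finset.sum_congr rfl; intro z _; ring
      rw [hexp, hw1, hx2', one_mul, sub_self]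
    have hnn2 : ∀ z ∈ T, 0 ≤ w z * (φ ((m:ℝ)-1) - z.2) := by
      intro z hz
      exact mul_nonneg (hw z hz).le (by linarith [hsndle z hz])
    obtain ⟨z, hz⟩ := hTne
    have hall := (Finset.sum_eq_zero_iff_of_nonneg hnn2).1 hzero2 z hz
    have hzeq : φ ((m:ℝ)-1) = z.2 := by
      rcases mul_eq_zero.1 hall with h|h
      · exact absurd h (ne_of_gt (hw z hz))
      · linarith
    obtain ⟨k1, k2, _, hk2⟩ := (hzlat z (hTsub hz)).1
    exact ⟨k2, by rw [hzeq, hk2]⟩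
  -- face lemma
  have hface : ∀ (t : ℝ) (U M1 : ℤ), -1 ≤ t → t ≤ (m:ℝ)-1 → 0 < M1 →
      (∀ y, -1 ≤ y → y ≤ (m:ℝ)-1 → (U:ℝ)*y + (M1:ℝ)*φ y ≤ (U:ℝ)*t + (M1:ℝ)*φ t) →
      ∃ a1 a2 b1 b2 : ℤ, (a1:ℝ) ≤ t ∧ t ≤ (b1:ℝ) ∧ (-1:ℤ) ≤ a1 ∧ (b1:ℝ) ≤ (m:ℝ)-1 ∧
        φ (a1:ℝ) = (a2:ℝ) ∧ φ (b1:ℝ) = (b2:ℝ) ∧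
        ((U*a1 + M1*a2 : ℤ):ℝ) = (U:ℝ)*t + (M1:ℝ)*φ t ∧
        ((U*b1 + M1*b2 : ℤ):ℝ) = (U:ℝ)*t + (M1:ℝ)*φ t := by
    intro t U M1 ht1 ht2 hM1 hdom
    obtain ⟨T, w, hTsub, hTne, hw, hw1, hx1, hx2⟩ :=
      hrep ((fun _ => t : Fin 1 → ℝ), φ t) (hpt t ht1 ht2)
    have hx1' : ∑ z ∈ T, w z * z.1 0 = t := hx1
    have hx2' : ∑ z ∈ T, w z * z.2 = φ t := hx2
    have hM1R : (0:ℝ) < (M1:ℝ) := by exact_mod_cast hM1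
    have hFle : ∀ z ∈ T, (U:ℝ)*z.1 0 + (M1:ℝ)*z.2 ≤ (U:ℝ)*t + (M1:ℝ)*φ t := by
      intro z hz
      obtain ⟨_, _, hzle, hzb⟩ := hzlat z (hTsub hz)
      have hd := hdom (z.1 0) hzb.1 hzb.2
      nlinarith [hzle]
    have hsum : ∑ z ∈ T, w z * ((U:ℝ)*z.1 0 + (M1:ℝ)*z.2) = (U:ℝ)*t + (M1:ℝ)*φ t := by
      have hexp : ∑ z ∈ T, w z * ((U:ℝ)*z.1 0 + (M1:ℝ)*z.2)
          = (U:ℝ) * (∑ z ∈ T, w z * z.1 0) + (M1:ℝ) * (∑ z ∈ T, w z * z.2) := by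
        rw [Finset.mul_sum, Finset.mul_sum, ← Finset.sum_add_distrib]
        apply Finset.sum_congr rfl; intro z _; ring
      rw [hexp, hx1', hx2']
    have hzero : ∑ z ∈ T, w z * (((U:ℝ)*t + (M1:ℝ)*φ t) - ((U:ℝ)*z.1 0 + (M1:ℝ)*z.2)) = 0 := by
      have hexp : ∑ z ∈ T, w z * (((U:ℝ)*t + (M1:ℝ)*φ t) - ((U:ℝ)*z.1 0 + (M1:ℝ)*z.2))
          = (∑ z ∈ T, w z) * ((U:ℝ)*t + (M1:ℝ)*φ t)
            - ∑ z ∈ T, w z * ((U:ℝ)*z.1 0 + (M1:ℝ)*z.2) := by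
        rw [Finset.sum_mul, ← Finset.sum_sub_distrib]
        apply Finset.sum_congr rfl; intro z _; ring
      rw [hexp, hw1, hsum, one_mul, sub_self]
    have hnn : ∀ z ∈ T, 0 ≤ w z * (((U:ℝ)*t + (M1:ℝ)*φ t) - ((U:ℝ)*z.1 0 + (M1:ℝ)*z.2)) := by
      intro z hz
      exact mul_nonneg (hw z hz).le (by linarith [hFle z hz])
    have hkey : ∀ z ∈ T, (U:ℝ)*z.1 0 + (M1:ℝ)*z.2 = (U:ℝ)*t + (M1:ℝ)*φ t
        ∧ z.2 = φ (z.1 0) := by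
      intro z hz
      have hall := (Finset.sum_eq_zero_iff_of_nonneg hnn).1 hzero z hz
      have heq1 : (U:ℝ)*z.1 0 + (M1:ℝ)*z.2 = (U:ℝ)*t + (M1:ℝ)*φ t := by
        rcases mul_eq_zero.1 hall with h|h
        · exact absurd h (ne_of_gt (hw z hz))
        · linarith
      refine ⟨heq1, ?_⟩
      obtain ⟨_, _, hzle, hzb⟩ := hzlat z (hTsub hz)
      have hd := hdom (z.1 0) hzb.1 hzb.2
      nlinarith [hzle, hd, heq1]
    obtain ⟨za, hzaT, hzamin⟩ := Finset.exists_min_image T (fun z => z.1 0) hTne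
    obtain ⟨zb, hzbT, hzbmax⟩ := Finset.exists_max_image T (fun z => z.1 0) hTne
    have hat : za.1 0 ≤ t := by
      have hs : ∑ z ∈ T, w z * za.1 0 ≤ ∑ z ∈ T, w z * z.1 0 :=
        Finset.sum_le_sum (fun z hz => mul_le_mul_of_nonneg_left (hzamin z hz) (hw z hz).le)
      rw [hx1', ← Finset.sum_mul, hw1, one_mul] at hs
      exact hs
    have hbt : t ≤ zb.1 0 := by
      have hs : ∑ z ∈ T, w z * z.1 0 ≤ ∑ z ∈ T, w z * zb.1 0 :=
        Finset.sum_le_sum (fun z hz => mul_le_mul_of_nonneg_left (hzbmax z hz) (hw z hz).le)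
      rw [hx1', ← Finset.sum_mul, hw1, one_mul] at hs
      exact hs
    obtain ⟨ka1, ka2, hka1, hka2⟩ := (hzlat za (hTsub hzaT)).1
    obtain ⟨kb1, kb2, hkb1, hkb2⟩ := (hzlat zb (hTsub hzbT)).1
    have hzab := (hzlat za (hTsub hzaT)).2.2.2
    have hzbb := (hzlat zb (hTsub hzbT)).2.2.2
    refine ⟨ka1, ka2, kb1, kb2, ?_, ?_, ?_, ?_, ?_, ?_, ?_, ?_⟩
    · rw [← hka1]; exact hat
    · rw [← hkb1]; exact hbt
    · have : (-1:ℝ) ≤ (ka1:ℝ) := by rw [← hka1]; exact hzab.1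
      exact_mod_cast this
    · rw [← hkb1]; exact hzbb.2
    · rw [← hka1, ← hka2]; exact ((hkey za hzaT).2).symm
    · rw [← hkb1, ← hkb2]; exact ((hkey zb hzbT).2).symm
    · push_cast
      rw [← hka1, ← hka2]
      exact (hkey za hzaT).1
    · push_cast
      rw [← hkb1, ← hkb2]
      exact (hkey zb hzbT).1
  -- height-one extraction
  have hAH : ∀ t : ℝ, -1 ≤ t → t ≤ (m:ℝ)-1 → ∃ U M1 : ℤ,
      |(U:ℝ)*t + (M1:ℝ)*φ t| = 1 ∧
      ∀ y, -1 ≤ y → y ≤ (m:ℝ)-1 → (U:ℝ)*y + (M1:ℝ)*φ y ≤ (U:ℝ)*t + (M1:ℝ)*φ t := by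
    intro t ht1 ht2
    obtain ⟨u, mz, hab, hdo⟩ := hht _ ((hboxmem t).2 ⟨ht1, ht2⟩)
    refine ⟨u 0, mz, ?_, ?_⟩
    · rw [dotZ, Fin.sum_univ_one] at hab
      have : (fun _ => t : Fin 1 → ℝ) 0 * ((u 0 : ℤ):ℝ) = ((u 0 : ℤ):ℝ) * t := by ring
      rw [this] at hab
      exact hab
    · intro y hy1 hy2
      have hd := hdo (fun _ => y) ((hboxmem y).2 ⟨hy1, hy2⟩)
      rw [dotZ, dotZ, Fin.sum_univ_one, Fin.sum_univ_one] at hd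
      have e1 : (fun _ => y : Fin 1 → ℝ) 0 * ((u 0 : ℤ):ℝ) = ((u 0:ℤ):ℝ) * y := by ring
      have e2 : (fun _ => t : Fin 1 → ℝ) 0 * ((u 0 : ℤ):ℝ) = ((u 0:ℤ):ℝ) * t := by ring
      rw [e1, e2] at hd
      exact hd

  -- Step 1: apply height-one at t = 0
  obtain ⟨U0, M0, habs0, hdom0⟩ := hAH 0 (by norm_num) (by linarith)
  have habs0' : |(M0:ℝ)*φ 0| = 1 := by
    have e : (U0:ℝ)*0 + (M0:ℝ)*φ 0 = (M0:ℝ)*φ 0 := by ring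
    rw [e] at habs0; exact habs0
  rcases lt_trichotomy M0 0 with hM0|hM0|hM0
  · -- M0 < 0 : f is a line, case (2)
    obtain ⟨n, hn⟩ : ∃ n:ℤ, M0 = -n := ⟨-M0, by ring⟩
    subst hn
    have hnpos : 0 < n := by omega
    have hnR : (0:ℝ) < (n:ℝ) := by exact_mod_cast hnpos
    have hMn : ((-n:ℤ):ℝ) = -(n:ℝ) := by push_cast; ring
    rw [hMn] at habs0'
    have hVneg : -(n:ℝ)*φ 0 < 0 := by
      have := mul_pos hnR hφ0pos
      linarith
    have hnφ0 : (n:ℝ)*φ 0 = 1 := by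
      rcases (abs_eq (by norm_num : (0:ℝ) ≤ 1)).1 habs0' with h|h
      · linarith
      · linarith
    have hlow : ∀ y, -1 ≤ y → y ≤ (m:ℝ)-1 → (n:ℝ)*φ 0 + (U0:ℝ)*y ≤ (n:ℝ)*φ y := by
      intro y hy1 hy2
      have hd := hdom0 y hy1 hy2
      rw [hMn] at hd
      linarith
    have hU0ge : (1:ℝ) ≤ (U0:ℝ) := by
      have hd := hlow (-1) le_rfl (by linarith)
      rw [hφm] at hd
      linarith [hnφ0]
    have hupm : φ ((m:ℝ)-1) ≤ (m:ℝ)*φ 0 := by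
      have hcc := hconc (-1) 0 ((m:ℝ)-1) le_rfl (by norm_num) (by linarith) le_rfl (by linarith)
      rw [hφm] at hcc
      linarith
    have h4 : (n:ℝ)*φ ((m:ℝ)-1) ≤ (m:ℝ) := by
      have hA := mul_le_mul_of_nonneg_left hupm hnR.le
      have hB : (n:ℝ)*((m:ℝ)*φ 0) = (m:ℝ) := by
        have : (n:ℝ)*((m:ℝ)*φ 0) = (m:ℝ)*((n:ℝ)*φ 0) := by ring
        rw [this, hnφ0, mul_one]
      linarith
    have hU0le : (U0:ℝ) ≤ 1 := by
      have h3 := hlow ((m:ℝ)-1) (by linarith) le_rfl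
      by_contra hcon
      push_neg at hcon
      have : (m:ℝ)-1 < (U0:ℝ)*((m:ℝ)-1) := by
        have hprod := mul_pos (by linarith : (0:ℝ) < (U0:ℝ)-1) (by linarith : (0:ℝ) < (m:ℝ)-1)
        linarith [hprod]
      linarith [hnφ0]
    have hU0e : (U0:ℝ) = 1 := le_antisymm hU0le hU0ge
    have hlinel : ∀ y, -1 ≤ y → y ≤ (m:ℝ)-1 → (y+1) ≤ (n:ℝ)*φ y := by
      intro y hy1 hy2
      have hd := hlow y hy1 hy2
      rw [hU0e] at hd
      linarith [hnφ0]
    have hφm1 : (n:ℝ)*φ ((m:ℝ)-1) = (m:ℝ) := by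
      have := hlinel ((m:ℝ)-1) (by linarith) le_rfl
      linarith [h4]
    have hline : ∀ y, -1 ≤ y → y ≤ (m:ℝ)-1 → (n:ℝ)*φ y = y + 1 := by
      intro y hy1 hy2
      refine le_antisymm ?_ (hlinel y hy1 hy2)
      rcases le_or_gt 0 y with hy0|hy0
      · have hcc := hconc (-1) 0 y le_rfl (by norm_num) hy0 hy2 (by linarith)
        rw [hφm] at hcc
        have h5 : φ y ≤ (y+1)*φ 0 := by linarith
        have h6 := mul_le_mul_of_nonneg_left h5 hnR.le
        have h7 : (n:ℝ)*((y+1)*φ 0) = y+1 := by linear_combination (y+1)*hnφ0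
        linarith
      · have hcc := hconc y 0 ((m:ℝ)-1) hy1 hy0.le (by linarith) le_rfl (by linarith)
        have h6 := mul_le_mul_of_nonneg_left hcc hnR.le
        have h7 : (n:ℝ)*((((m:ℝ)-1) - y)*φ 0) = ((m:ℝ)-1) - y := by
          linear_combination (((m:ℝ)-1) - y)*hnφ0
        have h8 : (n:ℝ)*((0 - y)*φ ((m:ℝ)-1)) = (0-y)*(m:ℝ) := by
          linear_combination (0-y)*hφm1
        by_contra hcon
        push_neg at hcon
        have h9 : ((m:ℝ)-1)*(y+1) < ((m:ℝ)-1)*((n:ℝ)*φ y) :=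
          mul_lt_mul_of_pos_left hcon (by linarith)
        linarith [h6, h7, h8, h9]
    obtain ⟨c, hc⟩ := hint
    have hcR : (n:ℝ)*(c:ℝ) = (m:ℝ) := by rw [← hc]; exact hφm1
    have hdvd : n ∣ m := ⟨c, by exact_mod_cast hcR.symm⟩
    have hn2 : 2 ≤ n := by
      by_contra hcon
      push_neg at hcon
      have hn1 : n = 1 := by omega
      rw [hn1] at hnφ0
      norm_num at hnφ0
      linarith
    refine ⟨0, n, hn2, Or.inr ⟨hdvd, ?_⟩⟩
    intro p hp
    obtain ⟨hp1, hp2⟩ := hp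
    push_cast at hp1 hp2
    have hfp : f p = φ (p 0) := congrArg f (fin1_pt p)
    rw [hfp, Int.cast_zero, zero_mul, sub_zero,
      eq_div_iff (by positivity : ((n:ℤ):ℝ) ≠ 0)]
    have := hline (p 0) hp1 hp2
    linarith
  · -- M0 = 0 : impossible
    exfalso
    rw [hM0] at habs0'
    norm_num at habs0'
  · -- M0 > 0 : the main case
    have hM0R : (0:ℝ) < (M0:ℝ) := by exact_mod_cast hM0
    have hV1 : (M0:ℝ)*φ 0 = 1 := by
      rcases (abs_eq (by norm_num : (0:ℝ) ≤ 1)).1 habs0' with h|h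
      · exact h
      · exfalso
        have := mul_pos hM0R hφ0pos
        linarith
    have hΛR : (1:ℝ) < (M0:ℝ) := by
      have h' := mul_lt_mul_of_pos_left hφ0lt hM0R
      rw [mul_one] at h'
      linarith
    have hΛ2 : 2 ≤ M0 := by
      have : (1:ℤ) < M0 := by exact_mod_cast hΛR
      omega
    have hΛpos : (0:ℝ) < (M0:ℝ) := hM0R
    obtain ⟨a1, a2, b1, b2, ha1le, hb1ge, ha1lb, hb1ub, hφa, hφb, hva, hvb⟩ :=
      hface 0 U0 M0 (by norm_num) (by linarith) hM0 hdom0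
    have hVval : (U0:ℝ)*0 + (M0:ℝ)*φ 0 = 1 := by rw [mul_zero, zero_add]; exact hV1
    have ha1 : a1 = -1 := by
      have h1' : (a1:ℝ) ≤ 0 := ha1le
      have h1'' : a1 ≤ 0 := by exact_mod_cast h1'
      rcases (by omega : a1 = -1 ∨ a1 = 0) with h|h
      · exact h
      · exfalso
        rw [h] at hφa
        norm_num at hφa
        have h2' : (0:ℝ) < (a2:ℝ) := by rw [← hφa]; exact hφ0pos
        have h3' : (a2:ℝ) < 1 := by rw [← hφa]; exact hφ0lt
        have h2'' : 0 < a2 := by exact_mod_cast h2'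
        have h3'' : a2 < 1 := by exact_mod_cast h3'
        omega
    have ha2 : a2 = 0 := by
      rw [ha1] at hφa
      norm_num at hφa
      rw [hφm] at hφa
      exact_mod_cast hφa.symm
    have hU0 : U0 = -1 := by
      rw [ha1, ha2, hVval] at hva
      have : (U0*(-1) + M0*0 : ℤ) = 1 := by exact_mod_cast hva
      omega
    have hU0R : (U0:ℝ) = -1 := by rw [hU0]; norm_num
    have hup : ∀ y, -1 ≤ y → y ≤ (m:ℝ)-1 → (M0:ℝ)*φ y ≤ y + 1 := by
      intro y hy1 hy2
      have hd := hdom0 y hy1 hy2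
      rw [hU0R] at hd
      linarith [hV1]
    have hb1eq : b1 = M0*b2 - 1 := by
      rw [hVval] at hvb
      have h' : (U0*b1 + M0*b2 : ℤ) = 1 := by exact_mod_cast hvb
      rw [hU0] at h'
      omega
    have hb1ge0 : (0:ℤ) ≤ b1 := by
      have : (0:ℝ) ≤ (b1:ℝ) := hb1ge
      exact_mod_cast this
    have hb2ge1 : 1 ≤ b2 := by
      by_contra hcon
      push_neg at hcon
      have hle : M0*b2 ≤ 0 := mul_nonpos_of_nonneg_of_nonpos (by omega) (by omega)
      omega
    have hb1ge1 : (1:ℤ) ≤ b1 := by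
      have h2b : 2*1 ≤ M0*b2 := mul_le_mul hΛ2 hb2ge1 (by norm_num) (by omega)
      omega
    have hQ1 : (1:ℝ) ≤ (b1:ℝ) := by exact_mod_cast hb1ge1
    have hQub : (b1:ℝ) ≤ (m:ℝ)-1 := hb1ub
    have hb2R : (1:ℝ) ≤ (b2:ℝ) := by exact_mod_cast hb2ge1
    have hQeq : (b1:ℝ) = (M0:ℝ)*(b2:ℝ) - 1 := by
      have := congrArg (fun k : ℤ => (k:ℝ)) hb1eq
      push_cast at this
      exact this
    have hlowchord : ∀ y, -1 ≤ y → y ≤ (b1:ℝ) → (M0:ℝ)*φ y = y + 1 := by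
      intro y hy1 hy2
      have hyub : y ≤ (m:ℝ)-1 := le_trans hy2 hQub
      refine le_antisymm (hup y hy1 hyub) ?_
      rcases eq_or_lt_of_le hy1 with h|h
      · rw [← h, hφm]
        norm_num
      · have hcc := hconc (-1) y (b1:ℝ) le_rfl hy1 hy2 hQub (by linarith)
        rw [hφm, hφb] at hcc
        have hb2pos : (0:ℝ) < (b2:ℝ) := by linarith
        have e : ((b1:ℝ) - -1) = (M0:ℝ)*(b2:ℝ) := by rw [hQeq]; ring
        rw [e] at hcc
        have h7 : (y+1)*(b2:ℝ) ≤ ((M0:ℝ)*φ y)*(b2:ℝ) := by linarith [hcc]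
        exact le_of_mul_le_mul_right h7 hb2pos
    -- the key step: at any interior point strictly below the line, φ = 1 etc.
    have hB2 : ∀ t, -1 < t → t < (m:ℝ)-1 → (M0:ℝ)*φ t < t + 1 →
        (φ t = 1 ∧ b2 = 1 ∧ ∀ y, -1 ≤ y → y ≤ (m:ℝ)-1 → φ y ≤ 1) := by
      intro t ht1 ht2 htlt
      have htQ : (b1:ℝ) < t := by
        by_contra hcon
        push_neg at hcon
        have := hlowchord t ht1.le hcon
        linarith
      have ht0 : (0:ℝ) < t := by linarith
      obtain ⟨U, M1, habs, hdom⟩ := hAH t ht1.le ht2.le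
      rcases lt_trichotomy M1 0 with hM1|hM1|hM1
      · -- M1 < 0 : forces φ globally linear, contradiction
        exfalso
        obtain ⟨n, hn⟩ : ∃ n:ℤ, M1 = -n := ⟨-M1, by ring⟩
        subst hn
        have hnpos : 0 < n := by omega
        have hnR : (0:ℝ) < (n:ℝ) := by exact_mod_cast hnpos
        have hMn : ((-n:ℤ):ℝ) = -(n:ℝ) := by push_cast; ring
        rw [hMn] at habs hdom
        set W : ℝ := (U:ℝ)*t + -(n:ℝ)*φ t with hW
        have hg : ∀ y, -1 ≤ y → y ≤ (m:ℝ)-1 → 0 ≤ (n:ℝ)*φ y - (U:ℝ)*y + W := by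
          intro y hy1 hy2
          have hd := hdom y hy1 hy2
          linarith
        have hg0 := hg 0 (by norm_num) (by linarith)
        have hgm := hg ((m:ℝ)-1) (by linarith) le_rfl
        have hgm1 := hg (-1) le_rfl (by linarith)
        rw [hφm] at hgm1
        have hcc1 := hconc 0 t ((m:ℝ)-1) (by norm_num) ht0.le ht2.le le_rfl (by linarith)
        have hcc2 := hconc (-1) t ((m:ℝ)-1) le_rfl ht1.le ht2.le le_rfl (by linarith)
        rw [hφm] at hcc2
        have key1 : ((m:ℝ)-1-t)*((n:ℝ)*φ 0 + W) + t*((n:ℝ)*φ ((m:ℝ)-1) - (U:ℝ)*((m:ℝ)-1) + W)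
            = (n:ℝ)*((((m:ℝ)-1) - t)*φ 0 + (t - 0)*φ ((m:ℝ)-1))
              - (n:ℝ)*((((m:ℝ)-1) - 0)*φ t) := by
          rw [hW]; ring
        have h6 := mul_le_mul_of_nonneg_left hcc1 hnR.le
        have key2 : ((m:ℝ)-1-t)*((n:ℝ)*φ 0 + W)
            + t*((n:ℝ)*φ ((m:ℝ)-1) - (U:ℝ)*((m:ℝ)-1) + W) ≤ 0 := by
          rw [key1]; linarith
        have hg0' : 0 ≤ (n:ℝ)*φ 0 + W := by linarith [hg0]
        have hx0 : (n:ℝ)*φ 0 + W ≤ 0 := by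
          by_contra hcon
          push_neg at hcon
          have hp1 : 0 ≤ t*((n:ℝ)*φ ((m:ℝ)-1) - (U:ℝ)*((m:ℝ)-1) + W) := mul_nonneg ht0.le hgm
          have hp2 : 0 < ((m:ℝ)-1-t)*((n:ℝ)*φ 0 + W) := mul_pos (by linarith) hcon
          linarith
        have hg0eq : (n:ℝ)*φ 0 + W = 0 := le_antisymm hx0 hg0'
        have key1' : ((m:ℝ)-1-t)*((U:ℝ) + W)
            + (t+1)*((n:ℝ)*φ ((m:ℝ)-1) - (U:ℝ)*((m:ℝ)-1) + W)
            = (n:ℝ)*((((m:ℝ)-1) - t)*0 + (t - -1)*φ ((m:ℝ)-1))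
              - (n:ℝ)*((((m:ℝ)-1) - -1)*φ t) := by
          rw [hW]; ring
        have h6' := mul_le_mul_of_nonneg_left hcc2 hnR.le
        have key2' : ((m:ℝ)-1-t)*((U:ℝ) + W)
            + (t+1)*((n:ℝ)*φ ((m:ℝ)-1) - (U:ℝ)*((m:ℝ)-1) + W) ≤ 0 := by
          rw [key1']; linarith
        have hxU : (U:ℝ) + W ≤ 0 := by
          by_contra hcon
          push_neg at hcon
          have hp1 : 0 ≤ (t+1)*((n:ℝ)*φ ((m:ℝ)-1) - (U:ℝ)*((m:ℝ)-1) + W) :=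
            mul_nonneg (by linarith) hgm
          have hp2 : 0 < ((m:ℝ)-1-t)*((U:ℝ) + W) := mul_pos (by linarith) hcon
          linarith
        have hgUeq : (U:ℝ) + W = 0 := le_antisymm hxU (by linarith [hgm1])
        have hgt : (n:ℝ)*φ t - (U:ℝ)*t + W = 0 := by rw [hW]; ring
        have hU' : (U:ℝ) = -W := by linarith
        rw [hU'] at hgt
        have hfin : (n:ℝ)*φ t = ((n:ℝ)*φ 0)*(t+1) := by
          have hnφ0' : (n:ℝ)*φ 0 = -W := by linarith
          rw [hnφ0']
          linarith [hgt]
        have hφt : φ t = φ 0 * (t+1) := by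
          have h9 : (n:ℝ)*φ t = (n:ℝ)*(φ 0*(t+1)) := by rw [hfin]; ring
          exact mul_left_cancel₀ (ne_of_gt hnR) h9
        have : (M0:ℝ)*φ t = t+1 := by
          rw [hφt, ← mul_assoc, hV1, one_mul]
        linarith
      · -- M1 = 0 : impossible at an interior point
        exfalso
        subst hM1
        simp only [Int.cast_zero, zero_mul, add_zero] at habs hdom
        have hU0' : U ≠ 0 := by
          intro h
          rw [h] at habs
          norm_num at habs
        rcases lt_or_gt_of_ne hU0' with h|h
        · have hd := hdom (-1) le_rfl (by linarith)
          have hUR : (U:ℝ) ≤ -1 := by exact_mod_cast (by omega : U ≤ -1)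
          have hprod := mul_pos (by linarith : (0:ℝ) < -(U:ℝ)) (by linarith : (0:ℝ) < t+1)
          nlinarith [hprod, hd]
        · have hd := hdom ((m:ℝ)-1) (by linarith) le_rfl
          have hUR : (1:ℝ) ≤ (U:ℝ) := by exact_mod_cast (by omega : 1 ≤ U)
          have hprod := mul_pos (by linarith : (0:ℝ) < (U:ℝ)) (by linarith : (0:ℝ) < (m:ℝ)-1-t)
          nlinarith [hprod, hd]
      · -- M1 > 0
        have hM1R : (0:ℝ) < (M1:ℝ) := by exact_mod_cast hM1
        obtain ⟨A1, A2, B1, B2, _, _, _, _, hφA, _, hvA, _⟩ :=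
          hface t U M1 ht1.le ht2.le hM1 hdom
        set W : ℝ := (U:ℝ)*t + (M1:ℝ)*φ t with hW
        have hWcases : W = 1 ∨ W = -1 := (abs_eq (by norm_num : (0:ℝ) ≤ 1)).1 habs
        have hWle : W ≤ 1 := by
          rcases hWcases with h|h
          · exact h.le
          · rw [h]; norm_num
        have hdm1 : -(U:ℝ) ≤ W := by
          have hd := hdom (-1) le_rfl (by linarith)
          rw [hφm] at hd
          linarith
        have hd0 : (M1:ℝ)*φ 0 ≤ W := by
          have hd := hdom 0 (by norm_num) (by linarith)
          linarith
        have hdQ : (U:ℝ)*(b1:ℝ) + (M1:ℝ)*(b2:ℝ) ≤ W := by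
          have hd := hdom (b1:ℝ) (by linarith) hQub
          rw [hφb] at hd
          exact hd
        rcases lt_trichotomy U 0 with hU|hU|hU
        · -- U ≤ -1
          exfalso
          have hUR : (U:ℝ) ≤ -1 := by exact_mod_cast (by omega : U ≤ -1)
          have hW1 : W = 1 := by
            rcases hWcases with h|h
            · exact h
            · exfalso; rw [h] at hdm1; linarith
          have hM1Λ : (M1:ℝ) ≤ (M0:ℝ) := by
            rw [hW1] at hd0
            by_contra hcon
            push_neg at hcon
            have := mul_lt_mul_of_pos_right hcon hφ0pos
            linarith [hV1]
          have hWt : (U:ℝ)*t + (M1:ℝ)*φ t = 1 := by rw [← hW1, hW]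
          have h8 : 1 + t ≤ (M1:ℝ)*φ t := by
            have hprod := mul_nonneg (by linarith : (0:ℝ) ≤ -(U:ℝ) - 1) ht0.le
            linarith [hWt, hprod]
          have hφtpos : 0 < φ t := by
            by_contra hcon
            push_neg at hcon
            have := mul_nonpos_of_nonneg_of_nonpos hM1R.le hcon
            linarith
          have hΛφt : 1 + t ≤ (M0:ℝ)*φ t := by
            calc 1 + t ≤ (M1:ℝ)*φ t := h8
            _ ≤ (M0:ℝ)*φ t := mul_le_mul_of_nonneg_right hM1Λ hφtpos.le
          linarith
        · -- U = 0 : the conclusion case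
          have hUR : (U:ℝ) = 0 := by rw [hU]; norm_num
          have hvA' : ((M1*A2 : ℤ):ℝ) = W := by
            rw [← hvA]
            push_cast
            rw [hUR]; ring
          have hM1A2 : (M1*A2 : ℤ) = 1 ∨ (M1*A2:ℤ) = -1 := by
            rcases hWcases with h|h
            · left; exact_mod_cast hvA'.trans h
            · right; exact_mod_cast hvA'.trans h
          have hM1dvd : M1 ∣ 1 := by
            rcases hM1A2 with h|h
            · exact ⟨A2, h.symm⟩
            · refine ⟨-A2, ?_⟩
              rw [mul_neg, h]
              norm_num
          have hM11 : M1 = 1 := by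
            rcases Int.isUnit_iff.1 (isUnit_of_dvd_one hM1dvd) with h|h
            · exact h
            · omega
          have hM11R : (M1:ℝ) = 1 := by rw [hM11]; norm_num
          have hb2W : (b2:ℝ) ≤ W := by
            rw [hUR, hM11R] at hdQ
            linarith
          have hW1 : W = 1 := by
            rcases hWcases with h|h
            · exact h
            · exfalso; rw [h] at hb2W; linarith
          have hφt1 : φ t = 1 := by
            have hWφ : W = φ t := by rw [hW, hUR, hM11R]; ring
            linarith [hW1]
          have hb2one : b2 = 1 := by
            have h1' : (b2:ℝ) ≤ 1 := by rw [← hW1]; exact hb2W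
            have h2' : b2 ≤ 1 := by exact_mod_cast h1'
            omega
          refine ⟨hφt1, hb2one, ?_⟩
          intro y hy1 hy2
          have hd := hdom y hy1 hy2
          rw [hUR, hM11R] at hd
          rw [hW1] at hd
          linarith
        · -- U ≥ 1
          exfalso
          have hUR : (1:ℝ) ≤ (U:ℝ) := by exact_mod_cast (by omega : 1 ≤ U)
          have hM1R1 : (1:ℝ) ≤ (M1:ℝ) := by exact_mod_cast (by omega : 1 ≤ M1)
          have h8 : (1:ℝ) ≤ (U:ℝ)*(b1:ℝ) := by
            have hprod := mul_nonneg (by linarith : (0:ℝ) ≤ (U:ℝ)-1) (by linarith : (0:ℝ) ≤ (b1:ℝ)-1)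
            linarith [hprod, hUR, hQ1]
          have h9 : (1:ℝ) ≤ (M1:ℝ)*(b2:ℝ) := by
            have hprod := mul_nonneg (by linarith : (0:ℝ) ≤ (M1:ℝ)-1) (by linarith : (0:ℝ) ≤ (b2:ℝ)-1)
            linarith [hprod, hM1R1, hb2R]
          linarith
    -- dichotomy
    by_cases hAQ : ∀ y, -1 ≤ y → y ≤ (m:ℝ)-1 → (M0:ℝ)*φ y = y + 1
    · obtain ⟨c, hc⟩ := hint
      have hcΛ : (M0:ℝ)*(c:ℝ) = (m:ℝ) := by
        have := hAQ ((m:ℝ)-1) (by linarith) le_rfl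
        rw [hc] at this
        linarith
      have hdvd : M0 ∣ m := ⟨c, by exact_mod_cast hcΛ.symm⟩
      refine ⟨0, M0, hΛ2, Or.inr ⟨hdvd, ?_⟩⟩
      intro p hp
      obtain ⟨hp1, hp2⟩ := hp
      push_cast at hp1 hp2
      have hfp : f p = φ (p 0) := congrArg f (fin1_pt p)
      rw [hfp, Int.cast_zero, zero_mul, sub_zero,
        eq_div_iff (by positivity : ((M0:ℤ):ℝ) ≠ 0)]
      have := hAQ (p 0) hp1 hp2
      linarith
    · push_neg at hAQ
      obtain ⟨y₀, hy₀1, hy₀2, hy₀ne⟩ := hAQ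
      have hy₀lt : (M0:ℝ)*φ y₀ < y₀ + 1 := lt_of_le_of_ne (hup y₀ hy₀1 hy₀2) hy₀ne
      have hEx : ∃ t₀, -1 < t₀ ∧ t₀ < (m:ℝ)-1 ∧ (M0:ℝ)*φ t₀ < t₀ + 1 := by
        rcases lt_or_eq_of_le hy₀2 with h|h
        · have hQy : (b1:ℝ) < y₀ := by
            by_contra hcon
            push_neg at hcon
            have := hlowchord y₀ hy₀1 hcon
            linarith
          exact ⟨y₀, by linarith, h, hy₀lt⟩
        · by_cases hexist : ∃ z, -1 < z ∧ z < (m:ℝ)-1 ∧ (M0:ℝ)*φ z < z + 1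
          · exact hexist
          · exfalso
            push_neg at hexist
            have hall : ∀ z, 0 ≤ z → z < (m:ℝ)-1 → φ z = (1/(M0:ℝ))*z + 1/(M0:ℝ) := by
              intro z hz1 hz2
              have h1' := hexist z (by linarith) hz2
              have h2' := hup z (by linarith) hz2.le
              have h3' : (M0:ℝ)*φ z = z+1 := le_antisymm h2' h1'
              field_simp
              linarith
            have hlge := hlim (1/(M0:ℝ)) (1/(M0:ℝ)) 0 (by norm_num) (by linarith) hall
            have h4' : (M0:ℝ)*((1/(M0:ℝ))*((m:ℝ)-1) + 1/(M0:ℝ)) = (m:ℝ) := by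
              field_simp
              ring
            have h3' : (m:ℝ) ≤ (M0:ℝ)*φ ((m:ℝ)-1) := by
              have h6 := mul_le_mul_of_nonneg_left hlge hΛpos.le
              linarith
            rw [h] at hy₀lt
            linarith
      obtain ⟨t₀, ht₀1, ht₀2, ht₀lt⟩ := hEx
      obtain ⟨hφt₀, hb2one, hφle1⟩ := hB2 t₀ ht₀1 ht₀2 ht₀lt
      have hQΛ : (b1:ℝ) = (M0:ℝ) - 1 := by
        rw [hQeq, hb2one]
        push_cast
        ring
      have ht₀Q : (b1:ℝ) < t₀ := by
        by_contra hcon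
        push_neg at hcon
        have := hlowchord t₀ ht₀1.le hcon
        linarith
      have hΛm : M0 < m := by
        have : (M0:ℝ) < (m:ℝ) := by linarith
        exact_mod_cast this
      have hφQ1 : φ (b1:ℝ) = 1 := by rw [hφb, hb2one]; norm_num
      have hflat : ∀ z, (b1:ℝ) < z → z < (m:ℝ)-1 → φ z = 1 := by
        intro z hz1 hz2
        have hz1' : -1 ≤ z := by linarith
        rcases le_or_gt z t₀ with hle|hlt
        · refine le_antisymm (hφle1 z hz1' hz2.le) ?_
          have hcc := hconc (b1:ℝ) z t₀ (by linarith) hz1.le hle ht₀2.le (by linarith)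
          rw [hφQ1, hφt₀] at hcc
          have h7 : (t₀ - (b1:ℝ))*1 ≤ (t₀ - (b1:ℝ))*φ z := by linarith
          exact le_of_mul_le_mul_left h7 (by linarith)
        · by_contra hne
          have hzlt : φ z < 1 := lt_of_le_of_ne (hφle1 z hz1' hz2.le) hne
          have hzlt2 : (M0:ℝ)*φ z < z + 1 := by
            have := mul_lt_mul_of_pos_left hzlt hΛpos
            rw [mul_one] at this
            linarith
          exact hne (hB2 z (by linarith) hz2 hzlt2).1
      refine ⟨0, M0, hΛ2, Or.inl ⟨hΛm, ?_⟩⟩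
      intro p hp
      obtain ⟨hp1, hp2⟩ := hp
      push_cast at hp1 hp2
      have hfp : f p = φ (p 0) := congrArg f (fin1_pt p)
      rw [hfp, Int.cast_zero, zero_mul, sub_zero]
      rcases le_or_gt (p 0) (b1:ℝ) with hyQ|hyQ
      · have hl := hlowchord (p 0) hp1 hyQ
        have hmin : min ((p 0 + 1) / ((M0:ℤ):ℝ)) 1 = (p 0 + 1)/((M0:ℤ):ℝ) := by
          apply min_eq_left
          rw [div_le_one hΛpos]
          linarith
        rw [hmin, eq_div_iff (ne_of_gt hΛpos)]
        linarith
      · have hmin : min ((p 0 + 1) / ((M0:ℤ):ℝ)) 1 = 1 := by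
          apply min_eq_right
          rw [le_div_iff₀ hΛpos]
          linarith
        rw [hmin]
        rcases lt_or_eq_of_le hp2 with h|h
        · exact hflat (p 0) hyQ h
        · rw [h]
          have hflat' : ∀ y, t₀ ≤ y → y < (m:ℝ)-1 → φ y = 0*y + 1 := by
            intro y hy1 hy2
            rw [hflat y (by linarith) hy2]
            ring
          have hlge := hlim 0 1 t₀ (by linarith) ht₀2 hflat'
          have h5 := hφle1 ((m:ℝ)-1) (by linarith) le_rfl
          linarith

end
end
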